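/- arXiv:2408.06615 — 4 statements merged into one kernel-verified Lean document; each statement's English description precedes it below -/
import Mathlib

section
/- Let p ∈ (0,1). For every ε > 0 there exists N* ∈ ℕ such that for every N ≥ N* there exist weights w_N^1, …, w_N^N ≥ 0 with ∑_{i=1}^N w_N^i = 1 and means μ_N^1, …, μ_N^N ∈ ℝ such that the Gaussian mixture ν_{0,N} = ∑_{i=1}^N w_N^i · N(μ_N^i, σ_N²) with uniform standard deviation σ_N = N^{−p} satisfies tv(ν₀, ν_{0,N}) ≤ ε, where ν₀ = N(0,1) is the standard normal distribution on ℝ. -/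
open MeasureTheory ProbabilityTheory Filter
open scoped NNReal ENNReal

/-- Total variation distance between two measures:
`tv(μ, ν) = sup_{A measurable} |μ(A) − ν(A)|`. -/
noncomputable def tvDist {α : Type*} [MeasurableSpace α] (μ ν : Measure α) : ℝ :=
  ⨆ s : {s : Set α // MeasurableSet s}, |(μ s.1).toReal - (ν s.1).toReal|

section Aux

open Real Set

/-- Gaussian density with real variance parameter. -/
noncomputable def gg (m v x : ℝ) : ℝ := (Real.sqrt (2*π*v))⁻¹ * Real.exp (-(x-m)^2/(2*v))

lemma gg_eq (m : ℝ) (v : ℝ≥0) (x : ℝ) : gaussianPDFReal m v x = gg m (v:ℝ) x := rfl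

lemma gg_nonneg (m v x : ℝ) : 0 ≤ gg m v x := by unfold gg; positivity

lemma continuous_gg (m v : ℝ) : Continuous (gg m v) := by unfold gg; fun_prop

lemma gg_le {v : ℝ} (hv : 0 < v) (m x : ℝ) : gg m v x ≤ (Real.sqrt (2*π*v))⁻¹ := by
  unfold gg
  have h1 : Real.exp (-(x-m)^2/(2*v)) ≤ 1 :=
    Real.exp_le_one_iff.2 (div_nonpos_of_nonpos_of_nonneg (neg_nonpos.2 (sq_nonneg _)) (by linarith))
  calc (Real.sqrt (2*π*v))⁻¹ * Real.exp (-(x-m)^2/(2*v)) ≤ (Real.sqrt (2*π*v))⁻¹ * 1 := by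
        apply mul_le_mul_of_nonneg_left h1 (by positivity)
    _ = _ := mul_one _

lemma integrable_gg {v : ℝ} (hv : 0 < v) (m : ℝ) : Integrable (gg m v) := by
  have : gg m v = gaussianPDFReal m ⟨v, hv.le⟩ := rfl
  rw [this]; exact integrable_gaussianPDFReal _ _

lemma integral_gg {v : ℝ} (hv : 0 < v) (m : ℝ) : ∫ x, gg m v x = 1 := by
  have : gg m v = gaussianPDFReal m ⟨v, hv.le⟩ := rfl
  rw [this]; exact integral_gaussianPDFReal_eq_one _ (fun h => hv.ne' (congrArg NNReal.toReal h))

lemma gg_symm (m v x : ℝ) : gg m v x = gg x v m := by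
  unfold gg
  rw [show -(x - m)^2 = -(m - x)^2 by ring]

lemma gg_mul {v w : ℝ} (hv : 0 < v) (hw : 0 < w) (x y : ℝ) :
    gg 0 w y * gg y v x = gg 0 (v+w) x * gg (x*w/(v+w)) (v*w/(v+w)) y := by
  unfold gg
  rw [mul_mul_mul_comm, mul_mul_mul_comm (Real.sqrt (2*π*(v+w)))⁻¹]
  congr 1
  · rw [← mul_inv, ← mul_inv, ← Real.sqrt_mul (by positivity), ← Real.sqrt_mul (by positivity)]
    congr 1
    field_simp
  · rw [← Real.exp_add, ← Real.exp_add]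
    congr 1
    field_simp
    ring

lemma integral_gg_conv {v w : ℝ} (hv : 0 < v) (hw : 0 < w) (x : ℝ) :
    ∫ y, gg 0 w y * gg y v x = gg 0 (v+w) x := by
  have hu : 0 < v*w/(v+w) := by positivity
  simp_rw [gg_mul hv hw x]
  rw [MeasureTheory.integral_const_mul, integral_gg hu, mul_one]

lemma setIntegral_Iic_shift (v a c : ℝ) :
    ∫ x in Iic c, gg a v x = ∫ x in Iic (c-a), gg 0 v x := by
  rw [← integral_indicator measurableSet_Iic, ← integral_indicator measurableSet_Iic]
  have h : ∀ x : ℝ, (Iic c).indicator (gg a v) x = (Iic (c-a)).indicator (gg 0 v) (x - a) := by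
    intro x
    by_cases h : x ≤ c
    · rw [indicator_of_mem (mem_Iic.2 h), indicator_of_mem (mem_Iic.2 (by linarith))]
      simp [gg]
    · rw [indicator_of_notMem (by simpa using h), indicator_of_notMem (by simp; linarith)]
  simp_rw [h]
  exact integral_sub_right_eq_self _ a

lemma gg_L1_le_aux {v : ℝ} (hv : 0 < v) {a b : ℝ} (hab : a ≤ b) :
    ∫ x, |gg a v x - gg b v x| ≤ (b - a) / Real.sqrt v := by
  set c := (a+b)/2 with hc
  have hia := integrable_gg hv a
  have hib := integrable_gg hv b
  have hd : Integrable (fun x => gg a v x - gg b v x) := hia.sub hib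
  have h_sign1 : ∀ x ∈ Iic c, 0 ≤ gg a v x - gg b v x := by
    intro x hx
    simp only [mem_Iic] at hx
    unfold gg
    rw [sub_nonneg]
    apply mul_le_mul_of_nonneg_left _ (by positivity)
    apply Real.exp_le_exp.2
    apply div_le_div_of_nonneg_right _ (by linarith)
    · nlinarith
  have h_sign2 : ∀ x ∈ Ioi c, gg a v x - gg b v x ≤ 0 := by
    intro x hx
    simp only [mem_Ioi] at hx
    unfold gg
    rw [sub_nonpos]
    apply mul_le_mul_of_nonneg_left _ (by positivity)
    apply Real.exp_le_exp.2
    apply div_le_div_of_nonneg_right _ (by linarith)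
    · nlinarith
  have hsplit : ∫ x, |gg a v x - gg b v x|
      = (∫ x in Iic c, |gg a v x - gg b v x|) + ∫ x in Ioi c, |gg a v x - gg b v x| := by
    rw [← compl_Iic]
    exact (integral_add_compl measurableSet_Iic hd.abs).symm
  have h1 : ∫ x in Iic c, |gg a v x - gg b v x| = ∫ x in Iic c, (gg a v x - gg b v x) :=
    setIntegral_congr_fun measurableSet_Iic (fun x hx => abs_of_nonneg (h_sign1 x hx))
  have h2 : ∫ x in Ioi c, |gg a v x - gg b v x| = - ∫ x in Ioi c, (gg a v x - gg b v x) := by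
    rw [← integral_neg]
    exact setIntegral_congr_fun measurableSet_Ioi (fun x hx => abs_of_nonpos (h_sign2 x hx))
  have htot : (∫ x in Iic c, (gg a v x - gg b v x)) + ∫ x in Ioi c, (gg a v x - gg b v x) = 0 := by
    rw [← compl_Iic, integral_add_compl measurableSet_Iic hd, integral_sub hia hib,
      integral_gg hv, integral_gg hv, sub_self]
  have key : ∫ x, |gg a v x - gg b v x| = 2 * ∫ x in Iic c, (gg a v x - gg b v x) := by
    rw [hsplit, h1, h2]; linarith
  rw [key, integral_sub hia.integrableOn hib.integrableOn,
    setIntegral_Iic_shift v a c, setIntegral_Iic_shift v b c]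
  have hle : c - b ≤ c - a := by linarith
  have hunion : Iic (c-b) ∪ Ioc (c-b) (c-a) = Iic (c-a) := Iic_union_Ioc_eq_Iic hle
  have hsplit2 : ∫ x in Iic (c-a), gg 0 v x
      = (∫ x in Iic (c-b), gg 0 v x) + ∫ x in Ioc (c-b) (c-a), gg 0 v x := by
    rw [← hunion]
    exact setIntegral_union (Iic_disjoint_Ioc le_rfl) measurableSet_Ioc
      (integrable_gg hv 0).integrableOn (integrable_gg hv 0).integrableOn
  rw [hsplit2]
  have hbound : ∫ x in Ioc (c-b) (c-a), gg 0 v x ≤ ((c-a) - (c-b)) * (Real.sqrt (2*π*v))⁻¹ := by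
    have : ∫ x in Ioc (c-b) (c-a), gg 0 v x ≤ ∫ _x in Ioc (c-b) (c-a), (Real.sqrt (2*π*v))⁻¹ := by
      apply setIntegral_mono_on (integrable_gg hv 0).integrableOn
        (integrableOn_const measure_Ioc_lt_top.ne) measurableSet_Ioc
      intro x _
      exact gg_le hv 0 x
    rw [setIntegral_const, measureReal_def, Real.volume_Ioc, ENNReal.toReal_ofReal (by linarith), smul_eq_mul] at this
    linarith [this]
  have hsqrt : (Real.sqrt (2*π*v))⁻¹ ≤ (2 * Real.sqrt v)⁻¹ := by
    apply inv_anti₀ (by positivity)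
    rw [show (2:ℝ)*π*v = (2*π)*v by ring, Real.sqrt_mul (by positivity)]
    apply mul_le_mul_of_nonneg_right _ (Real.sqrt_nonneg v)
    have h : (0:ℝ) ≤ 2*π := by positivity
    nlinarith [Real.sq_sqrt h, Real.sqrt_nonneg (2*π), Real.pi_gt_three,
      sq_nonneg (Real.sqrt (2*π) - 2)]
  have hfin : ((c-a) - (c-b)) * (Real.sqrt (2*π*v))⁻¹ ≤ (b-a) * (2 * Real.sqrt v)⁻¹ := by
    have : (c-a) - (c-b) = b - a := by ring
    rw [this]
    apply mul_le_mul_of_nonneg_left hsqrt (by linarith)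
  have : (b-a) * (2 * Real.sqrt v)⁻¹ = (b-a) / Real.sqrt v / 2 := by
    rw [mul_inv]; ring
  nlinarith [this, hfin, hbound]

lemma gg_L1 {v : ℝ} (hv : 0 < v) (a b : ℝ) :
    ∫ x, |gg a v x - gg b v x| ≤ |a - b| / Real.sqrt v := by
  rcases le_total a b with h | h
  · rw [abs_sub_comm, abs_of_nonneg (sub_nonneg.2 h)]
    exact gg_L1_le_aux hv h
  · rw [abs_of_nonneg (sub_nonneg.2 h)]
    simp_rw [abs_sub_comm (gg a v _)]
    exact gg_L1_le_aux hv h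

lemma integrableOn_exp_neg_Ioi' (c : ℝ) : IntegrableOn (fun x : ℝ => Real.exp (-x)) (Ioi c) := by
  have := exp_neg_integrableOn_Ioi c (one_pos (α := ℝ))
  simpa using this

lemma gg_tail_le {w : ℝ} (h1 : 1/2 ≤ w) (h2 : w ≤ 1) {R y : ℝ} (hR : 2 ≤ R) :
    (y ∈ Ici R ∨ y ∈ Iic (-R)) → gg 0 w y ≤ Real.exp (-|y|) := by
  intro hy
  have hw : 0 < w := by linarith
  have hbig : 2 ≤ |y| := by
    rcases hy with h | h <;> simp only [mem_Ici, mem_Iic] at h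
    · rw [abs_of_nonneg (by linarith)]; linarith
    · rw [abs_of_nonpos (by linarith)]; linarith
  have hconst : (Real.sqrt (2*π*w))⁻¹ ≤ 1 := by
    have h : (1:ℝ) ≤ Real.sqrt (2*π*w) := by
      rw [show (1:ℝ) = Real.sqrt 1 from Real.sqrt_one.symm]
      exact Real.sqrt_le_sqrt (by nlinarith [Real.pi_gt_three])
    exact inv_le_one_of_one_le₀ h
  have hexp : Real.exp (-(y-0)^2/(2*w)) ≤ Real.exp (-|y|) := by
    apply Real.exp_le_exp.2
    rw [sub_zero]
    rw [div_le_iff₀ (by linarith)]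
    have : y^2 = |y|^2 := (sq_abs y).symm
    nlinarith [abs_nonneg y]
  calc gg 0 w y ≤ 1 * Real.exp (-(y-0)^2/(2*w)) := by
        unfold gg; exact mul_le_mul_of_nonneg_right hconst (Real.exp_nonneg _)
    _ = Real.exp (-(y-0)^2/(2*w)) := one_mul _
    _ ≤ _ := hexp

lemma tail_bound {w : ℝ} (h1 : 1/2 ≤ w) (h2 : w ≤ 1) {R : ℝ} (hR : 2 ≤ R) :
    ∫ y in (Ico (-R) R)ᶜ, gg 0 w y ≤ 2 * Real.exp (-R) := by
  have hw : 0 < w := by linarith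
  have hcompl : (Ico (-R) R)ᶜ = Iio (-R) ∪ Ici R := by
    ext y
    simp only [mem_compl_iff, mem_Ico, not_and_or, not_le, not_lt, mem_union, mem_Iio, mem_Ici]
  have hdisj : Disjoint (Iio (-R)) (Ici R) := by
    rw [Set.disjoint_left]
    intro y hy hy'
    simp only [mem_Iio, mem_Ici] at *
    linarith
  rw [hcompl, setIntegral_union hdisj measurableSet_Ici
      (integrable_gg hw 0).integrableOn (integrable_gg hw 0).integrableOn]
  have hb1 : ∫ y in Iio (-R), gg 0 w y ≤ Real.exp (-R) := by
    have hmono : ∫ y in Iio (-R), gg 0 w y ≤ ∫ y in Iio (-R), Real.exp y := by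
      apply setIntegral_mono_on (integrable_gg hw 0).integrableOn
        ((integrableOn_exp_Iic (-R)).mono_set Iio_subset_Iic_self) measurableSet_Iio
      intro y hy
      simp only [mem_Iio] at hy
      calc gg 0 w y ≤ Real.exp (-|y|) := gg_tail_le h1 h2 hR (Or.inr (by simp; linarith))
        _ = Real.exp y := by rw [abs_of_nonpos (by linarith), neg_neg]
    calc ∫ y in Iio (-R), gg 0 w y ≤ ∫ y in Iio (-R), Real.exp y := hmono
      _ = ∫ y in Iic (-R), Real.exp y := (integral_Iic_eq_integral_Iio).symm
      _ = Real.exp (-R) := integral_exp_Iic _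
  have hb2 : ∫ y in Ici R, gg 0 w y ≤ Real.exp (-R) := by
    rw [integral_Ici_eq_integral_Ioi]
    have hmono : ∫ y in Ioi R, gg 0 w y ≤ ∫ y in Ioi R, Real.exp (-y) := by
      apply setIntegral_mono_on (integrable_gg hw 0).integrableOn
        (integrableOn_exp_neg_Ioi R) measurableSet_Ioi
      intro y hy
      simp only [mem_Ioi] at hy
      calc gg 0 w y ≤ Real.exp (-|y|) := gg_tail_le h1 h2 hR (Or.inl (by simp; linarith))
        _ = Real.exp (-y) := by rw [abs_of_nonneg (by linarith)]
    calc ∫ y in Ioi R, gg 0 w y ≤ ∫ y in Ioi R, Real.exp (-y) := hmono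
      _ = Real.exp (-R) := integral_exp_neg_Ioi _
  linarith

lemma sum_Ico_parts (f : ℝ → ℝ) (hf : Integrable f) (a δ : ℝ) (hδ : 0 ≤ δ) (n : ℕ) :
    ∑ i ∈ Finset.range n, ∫ x in Ico (a + i*δ) (a + (i+1)*δ), f x
      = ∫ x in Ico a (a + n*δ), f x := by
  induction n with
  | zero => simp
  | succ n ih =>
      rw [Finset.sum_range_succ, ih]
      have h1 : a ≤ a + n*δ := by
        have : (0:ℝ) ≤ n*δ := mul_nonneg (Nat.cast_nonneg n) hδ
        linarith
      have h2 : a + n*δ ≤ a + (n+1)*δ := by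
        have : (n:ℝ)*δ ≤ (n+1)*δ := by nlinarith
        linarith
      have hcast : ((n+1 : ℕ) : ℝ) = (n:ℝ) + 1 := by push_cast; ring
      rw [hcast, ← Set.Ico_union_Ico_eq_Ico h1 h2,
        setIntegral_union Set.Ico_disjoint_Ico_same measurableSet_Ico
          hf.integrableOn hf.integrableOn]

end Aux
section Fubini
open Real Set

lemma integrable_gg_mul {v w : ℝ} (hv : 0 < v) (hw : 0 < w) (x : ℝ) :
    Integrable (fun y => gg 0 w y * gg y v x) := by
  apply Integrable.mono' ((integrable_gg hv x).const_mul ((Real.sqrt (2*π*w))⁻¹))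
  · exact ((continuous_gg 0 w).mul (by unfold gg; fun_prop)).aestronglyMeasurable
  · apply Filter.Eventually.of_forall
    intro y
    rw [Real.norm_eq_abs, abs_of_nonneg (mul_nonneg (gg_nonneg _ _ _) (gg_nonneg _ _ _)),
      gg_symm y v x]
    exact mul_le_mul_of_nonneg_right (gg_le hw 0 y) (gg_nonneg _ _ _)

lemma cont_uncurry_A {v w : ℝ} : Continuous (fun q : ℝ × ℝ => gg 0 w q.2 * gg q.2 v q.1) := by
  unfold gg; fun_prop

lemma prod_int_A {v w : ℝ} (hv : 0 < v) (hw : 0 < w) {S : Set ℝ} (hS : MeasurableSet S) :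
    Integrable (fun q : ℝ × ℝ => gg 0 w q.2 * gg q.2 v q.1)
      (MeasureTheory.volume.prod (MeasureTheory.volume.restrict S)) := by
  rw [MeasureTheory.integrable_prod_iff cont_uncurry_A.aestronglyMeasurable]
  constructor
  · exact Filter.Eventually.of_forall fun x => (integrable_gg_mul hv hw x).integrableOn
  · apply Integrable.mono' (integrable_gg (show (0:ℝ) < v + w by linarith) 0)
    · exact (cont_uncurry_A.norm.aestronglyMeasurable
        (μ := MeasureTheory.volume.prod (MeasureTheory.volume.restrict S))).integral_prod_right'
    · apply Filter.Eventually.of_forall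
      intro x
      rw [Real.norm_eq_abs, abs_of_nonneg (integral_nonneg fun y => norm_nonneg _)]
      have h1 : ∫ y in S, ‖gg 0 w y * gg y v x‖ = ∫ y in S, gg 0 w y * gg y v x := by
        refine integral_congr_ae (Filter.Eventually.of_forall fun y => ?_)
        exact Real.norm_of_nonneg (mul_nonneg (gg_nonneg _ _ _) (gg_nonneg _ _ _))
      rw [h1, ← integral_gg_conv hv hw x]
      exact setIntegral_le_integral (integrable_gg_mul hv hw x)
        (Filter.Eventually.of_forall fun y => mul_nonneg (gg_nonneg _ _ _) (gg_nonneg _ _ _))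

lemma cont_uncurry_B {v w m : ℝ} :
    Continuous (fun q : ℝ × ℝ => gg 0 w q.2 * |gg q.2 v q.1 - gg m v q.1|) := by
  unfold gg; fun_prop

lemma integrable_gg_mul_abs {v w m : ℝ} (hv : 0 < v) (hw : 0 < w) (x : ℝ) :
    Integrable (fun y => gg 0 w y * |gg y v x - gg m v x|) := by
  have h := ((integrable_gg_mul hv hw x).sub ((integrable_gg hw 0).mul_const (gg m v x))).abs
  apply h.congr
  refine Filter.Eventually.of_forall fun y => ?_
  simp only [Pi.sub_apply]
  rw [← mul_sub, abs_mul, abs_of_nonneg (gg_nonneg _ _ _)]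

lemma prod_int_B {v w m : ℝ} (hv : 0 < v) (hw : 0 < w) {S : Set ℝ} (hS : MeasurableSet S) :
    Integrable (fun q : ℝ × ℝ => gg 0 w q.2 * |gg q.2 v q.1 - gg m v q.1|)
      (MeasureTheory.volume.prod (MeasureTheory.volume.restrict S)) := by
  rw [MeasureTheory.integrable_prod_iff cont_uncurry_B.aestronglyMeasurable]
  constructor
  · exact Filter.Eventually.of_forall fun x => (integrable_gg_mul_abs hv hw x).integrableOn
  · apply Integrable.mono'
      ((integrable_gg (show (0:ℝ) < v + w by linarith) 0).add (integrable_gg hv m))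
    · exact (cont_uncurry_B.norm.aestronglyMeasurable
        (μ := MeasureTheory.volume.prod (MeasureTheory.volume.restrict S))).integral_prod_right'
    · apply Filter.Eventually.of_forall
      intro x
      simp only [Pi.add_apply]
      rw [Real.norm_eq_abs, abs_of_nonneg (integral_nonneg fun y => norm_nonneg _)]
      have h1 : ∫ y in S, ‖gg 0 w y * |gg y v x - gg m v x|‖
          = ∫ y in S, gg 0 w y * |gg y v x - gg m v x| := by
        refine integral_congr_ae (Filter.Eventually.of_forall fun y => ?_)
        exact Real.norm_of_nonneg (mul_nonneg (gg_nonneg _ _ _) (abs_nonneg _))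
      rw [h1]
      have h2 : ∫ y in S, gg 0 w y * |gg y v x - gg m v x|
          ≤ ∫ y in S, (gg 0 w y * gg y v x + gg 0 w y * gg m v x) := by
        apply setIntegral_mono_on (integrable_gg_mul_abs hv hw x).integrableOn
          (((integrable_gg_mul hv hw x).add ((integrable_gg hw 0).mul_const _)).integrableOn) hS
        intro y _
        simp only [Pi.add_apply]
        rw [← mul_add]
        apply mul_le_mul_of_nonneg_left _ (gg_nonneg _ _ _)
        exact (abs_sub _ _).trans (by
          rw [abs_of_nonneg (gg_nonneg _ _ _), abs_of_nonneg (gg_nonneg _ _ _)])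
      have h3 : ∫ y in S, (gg 0 w y * gg y v x + gg 0 w y * gg m v x)
          ≤ ∫ y, (gg 0 w y * gg y v x + gg 0 w y * gg m v x) := by
        apply setIntegral_le_integral
          ((integrable_gg_mul hv hw x).add ((integrable_gg hw 0).mul_const _))
        refine Filter.Eventually.of_forall fun y => ?_
        show (0:ℝ) ≤ gg 0 w y * gg y v x + gg 0 w y * gg m v x
        have h01 := gg_nonneg 0 w y
        have h02 := gg_nonneg y v x
        have h03 := gg_nonneg m v x
        positivity
      have h4 : ∫ y, (gg 0 w y * gg y v x + gg 0 w y * gg m v x)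
          = gg 0 (v+w) x + gg m v x := by
        rw [MeasureTheory.integral_add (integrable_gg_mul hv hw x)
          ((integrable_gg hw 0).mul_const _), integral_gg_conv hv hw,
          MeasureTheory.integral_mul_const, integral_gg hw, one_mul]
      linarith
end Fubini
section KB
open Real Set

lemma Kint {v w m : ℝ} (hv : 0 < v) (hw : 0 < w) (a b : ℝ) :
    Integrable (fun x => ∫ y in Ico a b, gg 0 w y * |gg y v x - gg m v x|) :=
  (prod_int_B hv hw measurableSet_Ico).integral_prod_left

lemma Kbound {v w m δ : ℝ} (hv : 0 < v) (hw : 0 < w) (a b : ℝ)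
    (hm : ∀ y ∈ Ico a b, |y - m| ≤ δ) :
    (∫ x, ∫ y in Ico a b, gg 0 w y * |gg y v x - gg m v x|)
      ≤ (δ / Real.sqrt v) * ∫ y in Ico a b, gg 0 w y := by
  have hintB : Integrable (Function.uncurry fun x y => gg 0 w y * |gg y v x - gg m v x|)
      (MeasureTheory.volume.prod (MeasureTheory.volume.restrict (Ico a b))) :=
    prod_int_B hv hw measurableSet_Ico
  rw [integral_integral_swap hintB]
  have hinner : ∀ y : ℝ, (∫ x, gg 0 w y * |gg y v x - gg m v x|)
      = gg 0 w y * ∫ x, |gg y v x - gg m v x| := fun y => MeasureTheory.integral_const_mul _ _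
  rw [integral_congr_ae (Filter.Eventually.of_forall hinner)]
  have hb : ∀ y ∈ Ico a b,
      gg 0 w y * (∫ x, |gg y v x - gg m v x|) ≤ gg 0 w y * (δ / Real.sqrt v) := by
    intro y hy
    apply mul_le_mul_of_nonneg_left _ (gg_nonneg _ _ _)
    refine (gg_L1 hv y m).trans ?_
    gcongr
    · exact hm y hy
  have hint1 : IntegrableOn (fun y => gg 0 w y * ∫ x, |gg y v x - gg m v x|) (Ico a b) := by
    have h5 := hintB.integral_prod_right
    refine h5.congr (Filter.Eventually.of_forall fun y => ?_)
    show (∫ x, gg 0 w y * |gg y v x - gg m v x|) = gg 0 w y * ∫ x, |gg y v x - gg m v x|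
    exact MeasureTheory.integral_const_mul _ _
  have hmono := setIntegral_mono_on hint1 ((integrable_gg hw 0).mul_const _).integrableOn
    measurableSet_Ico hb
  refine hmono.trans (le_of_eq ?_)
  rw [MeasureTheory.integral_mul_const]
  ring

end KB

section Main
open Real Set
set_option maxHeartbeats 1000000

lemma main_est {v R : ℝ} (hv : 0 < v) (hv2 : v ≤ 1/2) (hR : 2 ≤ R) {N : ℕ} (hN : 1 ≤ N) :
    ∃ wgt mm : Fin N → ℝ, (∀ i, 0 ≤ wgt i) ∧ (∑ i, wgt i) = 1 ∧
      ∫ x, |gg 0 1 x - ∑ i, wgt i * gg (mm i) v x|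
        ≤ 4 * Real.exp (-R) + (2*R/(N:ℝ)) / Real.sqrt v := by
  have hw : 0 < 1 - v := by linarith
  obtain ⟨w, hwdef⟩ : ∃ w : ℝ, w = 1 - v := ⟨_, rfl⟩
  rw [← hwdef] at hw
  have hw1 : 1/2 ≤ w := by rw [hwdef]; linarith
  have hw2 : w ≤ 1 := by rw [hwdef]; linarith
  have hvw : v + w = 1 := by rw [hwdef]; ring
  have hNR : (0:ℝ) < (N:ℝ) := by exact_mod_cast Nat.pos_of_ne_zero (by omega)
  obtain ⟨δ, hδdef⟩ : ∃ d : ℝ, d = 2*R/(N:ℝ) := ⟨_, rfl⟩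
  have hδ : 0 < δ := by rw [hδdef]; positivity
  obtain ⟨e, hedef⟩ : ∃ e : ℕ → ℝ, e = fun i : ℕ => -R + (i:ℝ) * δ := ⟨_, rfl⟩
  have hediff : ∀ i : ℕ, e (i+1) = e i + δ := by
    intro i; rw [hedef]; push_cast; ring
  have hSmeas : MeasurableSet (Ico (-R) R) := measurableSet_Ico
  obtain ⟨Z, hZdef⟩ : ∃ z : ℝ, z = ∫ y in Ico (-R) R, gg 0 w y := ⟨_, rfl⟩
  obtain ⟨T, hTdef⟩ : ∃ t : ℝ, t = ∫ y in (Ico (-R) R)ᶜ, gg 0 w y := ⟨_, rfl⟩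
  have hZT : Z + T = 1 := by
    rw [hZdef, hTdef, integral_add_compl hSmeas (integrable_gg hw 0), integral_gg hw]
  have hT0 : 0 ≤ T := by
    rw [hTdef]
    exact setIntegral_nonneg hSmeas.compl fun y _ => gg_nonneg _ _ _
  have hTR : T ≤ 2 * Real.exp (-R) := by
    rw [hTdef]; exact tail_bound hw1 hw2 hR
  have hexpR : Real.exp (-R) ≤ 1/3 := by
    have h3 : (3:ℝ) ≤ Real.exp 2 := by nlinarith [Real.add_one_le_exp (2:ℝ)]
    have h4 : Real.exp (-R) ≤ (Real.exp 2)⁻¹ := by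
      rw [← Real.exp_neg]; exact Real.exp_le_exp.2 (by linarith)
    have h5 : (Real.exp 2)⁻¹ ≤ 3⁻¹ := inv_anti₀ (by norm_num) h3
    calc Real.exp (-R) ≤ (Real.exp 2)⁻¹ := h4
      _ ≤ 3⁻¹ := h5
      _ ≤ 1/3 := by norm_num
  have hZpos : 0 < Z := by linarith
  have hZ1 : Z ≤ 1 := by linarith
  obtain ⟨c, hcdef⟩ : ∃ c : Fin N → ℝ,
      ∀ i : Fin N, c i = ∫ y in Ico (e i.val) (e (i.val+1)), gg 0 w y := ⟨_, fun i => rfl⟩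
  have hc0 : ∀ i, 0 ≤ c i := fun i => by
    rw [hcdef i]
    exact setIntegral_nonneg measurableSet_Ico fun y _ => gg_nonneg _ _ _
  have hend : -R + (N:ℝ)*δ = R := by
    rw [hδdef]; field_simp; ring
  have hsumgen : ∀ g : ℝ → ℝ, Integrable g →
      ∑ i : Fin N, ∫ y in Ico (e i.val) (e (i.val+1)), g y = ∫ y in Ico (-R) R, g y := by
    intro g hg
    rw [Fin.sum_univ_eq_sum_range (fun i => ∫ y in Ico (e i) (e (i+1)), g y) N]
    have h1 : ∀ i : ℕ, (∫ y in Ico (e i) (e (i+1)), g y)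
        = ∫ y in Ico (-R + i*δ) (-R + (i+1)*δ), g y := by
      intro i
      congr 1
      rw [hedef]; push_cast; ring_nf
    rw [Finset.sum_congr rfl (fun i _ => h1 i), sum_Ico_parts g hg (-R) δ hδ.le N, hend]
  have hcsum : ∑ i, c i = Z := by
    rw [Finset.sum_congr rfl (fun i _ => hcdef i), hsumgen (gg 0 w) (integrable_gg hw 0), hZdef]
  refine ⟨fun i => Z⁻¹ * c i, fun i => e i.val,
    fun i => mul_nonneg (inv_nonneg.2 hZpos.le) (hc0 i), ?_, ?_⟩
  · rw [← Finset.mul_sum, hcsum, inv_mul_cancel₀ hZpos.ne']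
  -- the integral bound
  have hFint : Integrable (gg 0 1) := integrable_gg one_pos 0
  have hintF : ∫ x, gg 0 1 x = 1 := integral_gg one_pos 0
  have hJle : ∀ x, (∫ y in Ico (-R) R, gg 0 w y * gg y v x) ≤ gg 0 1 x := by
    intro x
    have h1 : (∫ y in Ico (-R) R, gg 0 w y * gg y v x) ≤ ∫ y, gg 0 w y * gg y v x :=
      setIntegral_le_integral (integrable_gg_mul hv hw x)
        (Filter.Eventually.of_forall fun y => mul_nonneg (gg_nonneg _ _ _) (gg_nonneg _ _ _))
    rwa [integral_gg_conv hv hw, hvw] at h1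
  have hJint : Integrable (fun x => ∫ y in Ico (-R) R, gg 0 w y * gg y v x) :=
    (prod_int_A hv hw hSmeas).integral_prod_left
  have hintJ : ∫ x, (∫ y in Ico (-R) R, gg 0 w y * gg y v x) = Z := by
    have hintA : Integrable (Function.uncurry fun x y => gg 0 w y * gg y v x)
        (MeasureTheory.volume.prod (MeasureTheory.volume.restrict (Ico (-R) R))) :=
      prod_int_A hv hw hSmeas
    rw [integral_integral_swap hintA]
    have h1 : ∀ y : ℝ, (∫ x, gg 0 w y * gg y v x) = gg 0 w y := by
      intro y
      rw [MeasureTheory.integral_const_mul, integral_gg hv, mul_one]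
    rw [integral_congr_ae (Filter.Eventually.of_forall h1), hZdef]
  have hJpint : Integrable (fun x => ∑ i, c i * gg (e i.val) v x) :=
    integrable_finset_sum _ (fun i _ => (integrable_gg hv _).const_mul _)
  have hHint : Integrable (fun x => ∑ i, (Z⁻¹ * c i) * gg (e i.val) v x) :=
    integrable_finset_sum _ (fun i _ => (integrable_gg hv _).const_mul _)
  have hintJp : ∫ x, (∑ i, c i * gg (e i.val) v x) = Z := by
    rw [integral_finset_sum _ (fun i _ => (integrable_gg hv _).const_mul _)]
    have h1 : ∀ i : Fin N, (∫ x, c i * gg (e i.val) v x) = c i := by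
      intro i
      rw [MeasureTheory.integral_const_mul, integral_gg hv, mul_one]
    rw [Finset.sum_congr rfl (fun i _ => h1 i), hcsum]
  have hJp0 : ∀ x, 0 ≤ ∑ i, c i * gg (e i.val) v x := fun x =>
    Finset.sum_nonneg fun i _ => mul_nonneg (hc0 i) (gg_nonneg _ _ _)
  have hHJp : ∀ x, (∑ i, (Z⁻¹ * c i) * gg (e i.val) v x)
      = Z⁻¹ * ∑ i, c i * gg (e i.val) v x := by
    intro x
    rw [Finset.mul_sum]
    exact Finset.sum_congr rfl fun i _ => by ring
  have hZinv1 : 1 ≤ Z⁻¹ := by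
    nlinarith [mul_inv_cancel₀ hZpos.ne', inv_nonneg.2 hZpos.le]
  -- Term 1
  have hterm1 : ∫ x, |gg 0 1 x - ∫ y in Ico (-R) R, gg 0 w y * gg y v x| = 1 - Z := by
    have h1 : ∀ x, |gg 0 1 x - ∫ y in Ico (-R) R, gg 0 w y * gg y v x|
        = gg 0 1 x - ∫ y in Ico (-R) R, gg 0 w y * gg y v x := fun x =>
      abs_of_nonneg (by linarith [hJle x])
    rw [integral_congr_ae (Filter.Eventually.of_forall h1),
      integral_sub hFint hJint, hintF, hintJ]
  -- Term 3
  have hterm3 : ∫ x, |(∑ i, c i * gg (e i.val) v x) - ∑ i, (Z⁻¹ * c i) * gg (e i.val) v x|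
      = (Z⁻¹ - 1) * Z := by
    have h1 : ∀ x, |(∑ i, c i * gg (e i.val) v x) - ∑ i, (Z⁻¹ * c i) * gg (e i.val) v x|
        = (Z⁻¹ - 1) * ∑ i, c i * gg (e i.val) v x := by
      intro x
      rw [hHJp x]
      have h2 : (∑ i, c i * gg (e i.val) v x) - Z⁻¹ * ∑ i, c i * gg (e i.val) v x
          = -((Z⁻¹ - 1) * ∑ i, c i * gg (e i.val) v x) := by ring
      rw [h2, abs_neg, abs_of_nonneg]
      exact mul_nonneg (by linarith) (hJp0 x)
    rw [integral_congr_ae (Filter.Eventually.of_forall h1),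
      MeasureTheory.integral_const_mul, hintJp]
  -- Term 2
  have hKint : ∀ i : Fin N, Integrable (fun x =>
      ∫ y in Ico (e i.val) (e (i.val+1)), gg 0 w y * |gg y v x - gg (e i.val) v x|) :=
    fun i => Kint hv hw _ _
  have hterm2 : ∫ x, |(∫ y in Ico (-R) R, gg 0 w y * gg y v x)
        - ∑ i, c i * gg (e i.val) v x| ≤ (δ / Real.sqrt v) * Z := by
    have hptw : ∀ x, |(∫ y in Ico (-R) R, gg 0 w y * gg y v x)
        - ∑ i, c i * gg (e i.val) v x|
        ≤ ∑ i : Fin N, ∫ y in Ico (e i.val) (e (i.val+1)),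
            gg 0 w y * |gg y v x - gg (e i.val) v x| := by
      intro x
      have hJsplit : (∫ y in Ico (-R) R, gg 0 w y * gg y v x)
          = ∑ i : Fin N, ∫ y in Ico (e i.val) (e (i.val+1)), gg 0 w y * gg y v x :=
        (hsumgen _ (integrable_gg_mul hv hw x)).symm
      have hJpsplit : ∀ i : Fin N, c i * gg (e i.val) v x
          = ∫ y in Ico (e i.val) (e (i.val+1)), gg 0 w y * gg (e i.val) v x := by
        intro i
        rw [hcdef i]
        exact (MeasureTheory.integral_mul_const _ _).symm
      rw [hJsplit, Finset.sum_congr rfl (fun i _ => hJpsplit i), ← Finset.sum_sub_distrib]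
      refine (Finset.abs_sum_le_sum_abs _ _).trans (Finset.sum_le_sum fun i _ => ?_)
      rw [← integral_sub (integrable_gg_mul hv hw x).integrableOn
        ((integrable_gg hw 0).mul_const _).integrableOn]
      have habs : |∫ y in Ico (e i.val) (e (i.val+1)),
          (gg 0 w y * gg y v x - gg 0 w y * gg (e i.val) v x)|
          ≤ ∫ y in Ico (e i.val) (e (i.val+1)),
            |gg 0 w y * gg y v x - gg 0 w y * gg (e i.val) v x| := by
        have := MeasureTheory.norm_integral_le_integral_norm
          (μ := MeasureTheory.volume.restrict (Ico (e i.val) (e (i.val+1))))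
          (f := fun y => gg 0 w y * gg y v x - gg 0 w y * gg (e i.val) v x)
        simpa [Real.norm_eq_abs] using this
      refine habs.trans (le_of_eq ?_)
      refine integral_congr_ae (Filter.Eventually.of_forall fun y => ?_)
      show |gg 0 w y * gg y v x - gg 0 w y * gg (e i.val) v x|
          = gg 0 w y * |gg y v x - gg (e i.val) v x|
      rw [← mul_sub, abs_mul, abs_of_nonneg (gg_nonneg _ _ _)]
    calc ∫ x, |(∫ y in Ico (-R) R, gg 0 w y * gg y v x) - ∑ i, c i * gg (e i.val) v x|
        ≤ ∫ x, ∑ i : Fin N, ∫ y in Ico (e i.val) (e (i.val+1)),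
            gg 0 w y * |gg y v x - gg (e i.val) v x| :=
          integral_mono ((hJint.sub hJpint).abs)
            (integrable_finset_sum _ fun i _ => hKint i) hptw
      _ = ∑ i : Fin N, ∫ x, ∫ y in Ico (e i.val) (e (i.val+1)),
            gg 0 w y * |gg y v x - gg (e i.val) v x| :=
          integral_finset_sum _ (fun i _ => hKint i)
      _ ≤ ∑ i : Fin N, (δ / Real.sqrt v) * c i := by
          refine Finset.sum_le_sum fun i _ => ?_
          have hm : ∀ y ∈ Ico (e i.val) (e (i.val+1)), |y - e i.val| ≤ δ := by
            intro y hy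
            rw [hediff i.val] at hy
            rw [abs_of_nonneg (by linarith [hy.1])]
            linarith [hy.2]
          rw [hcdef i]
          exact Kbound hv hw (e i.val) (e (i.val+1)) hm
      _ = (δ / Real.sqrt v) * Z := by rw [← Finset.mul_sum, hcsum]
  -- combine
  have htri : ∀ x : ℝ, |gg 0 1 x - ∑ i, (Z⁻¹ * c i) * gg (e i.val) v x|
      ≤ |gg 0 1 x - ∫ y in Ico (-R) R, gg 0 w y * gg y v x|
        + |(∫ y in Ico (-R) R, gg 0 w y * gg y v x) - ∑ i, c i * gg (e i.val) v x|
        + |(∑ i, c i * gg (e i.val) v x) - ∑ i, (Z⁻¹ * c i) * gg (e i.val) v x| := by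
    intro x
    have t1 := abs_sub_le (gg 0 1 x) (∑ i, c i * gg (e i.val) v x)
      (∑ i, (Z⁻¹ * c i) * gg (e i.val) v x)
    have t2 := abs_sub_le (gg 0 1 x) (∫ y in Ico (-R) R, gg 0 w y * gg y v x)
      (∑ i, c i * gg (e i.val) v x)
    linarith
  have hi1 : Integrable (fun x =>
      |gg 0 1 x - ∫ y in Ico (-R) R, gg 0 w y * gg y v x|) := (hFint.sub hJint).abs
  have hi2 : Integrable (fun x =>
      |(∫ y in Ico (-R) R, gg 0 w y * gg y v x) - ∑ i, c i * gg (e i.val) v x|) :=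
    (hJint.sub hJpint).abs
  have hi3 : Integrable (fun x =>
      |(∑ i, c i * gg (e i.val) v x) - ∑ i, (Z⁻¹ * c i) * gg (e i.val) v x|) :=
    (hJpint.sub hHint).abs
  have hi12 : Integrable (fun x =>
      |gg 0 1 x - ∫ y in Ico (-R) R, gg 0 w y * gg y v x|
      + |(∫ y in Ico (-R) R, gg 0 w y * gg y v x) - ∑ i, c i * gg (e i.val) v x|) :=
    hi1.add hi2
  have hrhs_int : Integrable (fun x =>
      |gg 0 1 x - ∫ y in Ico (-R) R, gg 0 w y * gg y v x|
        + |(∫ y in Ico (-R) R, gg 0 w y * gg y v x) - ∑ i, c i * gg (e i.val) v x|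
        + |(∑ i, c i * gg (e i.val) v x) - ∑ i, (Z⁻¹ * c i) * gg (e i.val) v x|) :=
    hi12.add hi3
  have hfinal : ∫ x, |gg 0 1 x - ∑ i, (Z⁻¹ * c i) * gg (e i.val) v x|
      ≤ (1 - Z) + (δ / Real.sqrt v) * Z + (Z⁻¹ - 1) * Z := by
    calc ∫ x, |gg 0 1 x - ∑ i, (Z⁻¹ * c i) * gg (e i.val) v x|
        ≤ ∫ x, (|gg 0 1 x - ∫ y in Ico (-R) R, gg 0 w y * gg y v x|
          + |(∫ y in Ico (-R) R, gg 0 w y * gg y v x) - ∑ i, c i * gg (e i.val) v x|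
          + |(∑ i, c i * gg (e i.val) v x) - ∑ i, (Z⁻¹ * c i) * gg (e i.val) v x|) :=
          integral_mono (hFint.sub hHint).abs hrhs_int htri
      _ = (∫ x, |gg 0 1 x - ∫ y in Ico (-R) R, gg 0 w y * gg y v x|)
          + (∫ x, |(∫ y in Ico (-R) R, gg 0 w y * gg y v x) - ∑ i, c i * gg (e i.val) v x|)
          + ∫ x, |(∑ i, c i * gg (e i.val) v x) - ∑ i, (Z⁻¹ * c i) * gg (e i.val) v x| := by
          rw [MeasureTheory.integral_add hi12 hi3, MeasureTheory.integral_add hi1 hi2]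
      _ ≤ (1 - Z) + (δ / Real.sqrt v) * Z + (Z⁻¹ - 1) * Z := by
          rw [hterm1, hterm3]
          linarith [hterm2]
  have hZZ : (Z⁻¹ - 1) * Z = 1 - Z := by
    field_simp
  have hdsv : 0 ≤ δ / Real.sqrt v := by positivity
  have hlast : (δ / Real.sqrt v) * Z ≤ δ / Real.sqrt v := by nlinarith
  calc ∫ x, |gg 0 1 x - ∑ i, (Z⁻¹ * c i) * gg (e i.val) v x|
      ≤ (1 - Z) + (δ / Real.sqrt v) * Z + (Z⁻¹ - 1) * Z := hfinal
    _ = 2 * T + (δ / Real.sqrt v) * Z := by rw [hZZ]; linarith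
    _ ≤ 4 * Real.exp (-R) + δ / Real.sqrt v := by linarith
    _ = 4 * Real.exp (-R) + (2*R/(N:ℝ)) / Real.sqrt v := by rw [hδdef]

end Main

/-- For `p ∈ (0,1)` and every `ε > 0` there is `N*` such that for every `N ≥ N*` there are
nonnegative weights summing to one and means such that the Gaussian mixture with uniform
standard deviation `σ_N = N^{-p}` (variance `N^{-2p}`) approximates the standard normal
distribution to within `ε` in total variation distance. -/
theorem gaussian_mixture_tv_approx (p : ℝ) (hp : p ∈ Set.Ioo (0 : ℝ) 1) :
    ∀ ε > 0, ∃ Nstar : ℕ, ∀ N ≥ Nstar,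
      ∃ w μ : Fin N → ℝ, (∀ i, 0 ≤ w i) ∧ (∑ i, w i = 1) ∧
        tvDist (gaussianReal 0 1)
          (∑ i, ENNReal.ofReal (w i) • gaussianReal (μ i) ((N : ℝ≥0) ^ (-(2 * p)))) ≤ ε := by
  obtain ⟨hp0, hp1⟩ := hp
  intro ε hε
  set ε' := min ε 1 with hε'def
  have hε'pos : 0 < ε' := lt_min hε one_pos
  have hε'le : ε' ≤ ε := min_le_left _ _
  set R := max 2 (Real.log (8/ε')) with hRdef
  have hR2 : (2:ℝ) ≤ R := le_max_left _ _
  have hR0 : (0:ℝ) < R := by linarith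
  have hRexp : Real.exp (-R) ≤ ε'/8 := by
    have h1 : Real.log (8/ε') ≤ R := le_max_right _ _
    have h2 : Real.exp (-R) ≤ Real.exp (-(Real.log (8/ε'))) := Real.exp_le_exp.2 (by linarith)
    have h3 : Real.exp (-(Real.log (8/ε'))) = ε'/8 := by
      rw [Real.exp_neg, Real.exp_log (by positivity), inv_div]
    linarith
  have htend : Filter.Tendsto (fun n : ℕ => 2*R*(n:ℝ)^(p-1)) Filter.atTop (nhds 0) := by
    have h1 : Filter.Tendsto (fun x : ℝ => x^(-(1-p))) Filter.atTop (nhds 0) :=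
      tendsto_rpow_neg_atTop (by linarith)
    have h2 := (h1.comp tendsto_natCast_atTop_atTop).const_mul (2*R)
    rw [mul_zero] at h2
    refine h2.congr fun n => ?_
    simp only [Function.comp_apply]
    rw [show -(1-p) = p - 1 by ring]
  have htend2 : Filter.Tendsto (fun n : ℕ => ((n:ℝ))^(-(2*p))) Filter.atTop (nhds 0) :=
    (tendsto_rpow_neg_atTop (by linarith)).comp tendsto_natCast_atTop_atTop
  have hev1 : ∀ᶠ n : ℕ in Filter.atTop, 2*R*(n:ℝ)^(p-1) < ε'/2 :=
    htend.eventually_lt_const (by positivity)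
  have hev2 : ∀ᶠ n : ℕ in Filter.atTop, ((n:ℝ))^(-(2*p)) < 1/2 :=
    htend2.eventually_lt_const (by norm_num)
  have hev3 : ∀ᶠ n : ℕ in Filter.atTop, 1 ≤ n := Filter.eventually_ge_atTop 1
  obtain ⟨Nstar, hNstar⟩ := Filter.eventually_atTop.1 ((hev1.and (hev2.and hev3)))
  refine ⟨Nstar, fun N hN => ?_⟩
  obtain ⟨hb1, hb2, hb3⟩ := hNstar N hN
  have hNpos : (0:ℝ) < (N:ℝ) := by
    have : (0:ℕ) < N := by omega
    exact_mod_cast this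
  have hv : (0:ℝ) < (N:ℝ)^(-(2*p)) := Real.rpow_pos_of_pos hNpos _
  obtain ⟨wgt, mm, hw0, hw1, hbound⟩ := main_est hv hb2.le hR2 hb3
  refine ⟨wgt, mm, hw0, hw1, ?_⟩
  -- arithmetic for the bound
  have hsq : Real.sqrt ((N:ℝ)^(-(2*p))) = (N:ℝ)^(-p) := by
    have h1 : (N:ℝ)^(-(2*p)) = ((N:ℝ)^(-p))^2 := by
      rw [← Real.rpow_natCast ((N:ℝ)^(-p)) 2, ← Real.rpow_mul hNpos.le]
      congr 1
      push_cast
      ring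
    rw [h1, Real.sqrt_sq (Real.rpow_nonneg hNpos.le _)]
  have hquot : (2*R/(N:ℝ)) / Real.sqrt ((N:ℝ)^(-(2*p))) = 2*R*(N:ℝ)^(p-1) := by
    have hNp : (0:ℝ) < (N:ℝ)^p := Real.rpow_pos_of_pos hNpos p
    rw [hsq, Real.rpow_neg hNpos.le, Real.rpow_sub hNpos, Real.rpow_one]
    field_simp
  have hVr : (((N : ℝ≥0) ^ (-(2 * p)) : ℝ≥0) : ℝ) = (N:ℝ)^(-(2*p)) := by
    rw [NNReal.coe_rpow, NNReal.coe_natCast]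
  have hV0 : ((N : ℝ≥0) ^ (-(2 * p)) : ℝ≥0) ≠ 0 := by
    intro h
    rw [h, NNReal.coe_zero] at hVr
    exact hv.ne' hVr.symm
  have hggV : ∀ m : ℝ, gaussianPDFReal m ((N : ℝ≥0) ^ (-(2 * p))) = gg m ((N:ℝ)^(-(2*p))) := by
    intro m
    funext x
    rw [gg_eq, hVr]
  have hHint : Integrable (fun x => ∑ i, wgt i * gg (mm i) ((N:ℝ)^(-(2*p))) x) :=
    integrable_finset_sum _ (fun i _ => (integrable_gg hv _).const_mul _)
  -- identify the measures on sets
  have key0 : ∀ A : Set ℝ, MeasurableSet A →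
      ((gaussianReal 0 1) A).toReal = ∫ x in A, gg 0 1 x := by
    intro A hA
    rw [gaussianReal_apply_eq_integral _ one_ne_zero,
      ENNReal.toReal_ofReal (setIntegral_nonneg hA fun x _ => gaussianPDFReal_nonneg _ _ _)]
    have h : gaussianPDFReal 0 1 = gg 0 1 := by
      funext x
      rw [gg_eq, NNReal.coe_one]
    rw [h]
  have key : ∀ A : Set ℝ, MeasurableSet A →
      ((∑ i, ENNReal.ofReal (wgt i) • gaussianReal (mm i) ((N : ℝ≥0) ^ (-(2 * p)))) A).toReal
      = ∫ x in A, ∑ i, wgt i * gg (mm i) ((N:ℝ)^(-(2*p))) x := by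
    intro A hA
    rw [MeasureTheory.Measure.finset_sum_apply]
    have h1 : ∀ i : Fin N, (ENNReal.ofReal (wgt i) • gaussianReal (mm i)
        ((N : ℝ≥0) ^ (-(2 * p)))) A
        = ENNReal.ofReal (wgt i * ∫ x in A, gg (mm i) ((N:ℝ)^(-(2*p))) x) := by
      intro i
      rw [MeasureTheory.Measure.smul_apply, smul_eq_mul,
        gaussianReal_apply_eq_integral _ hV0, hggV (mm i),
        ← ENNReal.ofReal_mul (hw0 i)]
    rw [Finset.sum_congr rfl (fun i _ => h1 i),
      ENNReal.toReal_sum (fun i _ => ENNReal.ofReal_ne_top)]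
    have h2 : ∀ i : Fin N, (ENNReal.ofReal (wgt i * ∫ x in A, gg (mm i) ((N:ℝ)^(-(2*p))) x)).toReal
        = wgt i * ∫ x in A, gg (mm i) ((N:ℝ)^(-(2*p))) x := fun i =>
      ENNReal.toReal_ofReal (mul_nonneg (hw0 i)
        (setIntegral_nonneg hA fun x _ => gg_nonneg _ _ _))
    rw [Finset.sum_congr rfl (fun i _ => h2 i),
      Finset.sum_congr rfl (fun (i : Fin N) _ =>
        (MeasureTheory.integral_const_mul (wgt i)
          (fun x => gg (mm i) ((N:ℝ)^(-(2*p))) x)).symm),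
      ← MeasureTheory.integral_finset_sum _
        (fun i _ => ((integrable_gg hv (mm i)).const_mul _).integrableOn)]
  unfold tvDist
  refine Real.iSup_le (fun s => ?_) hε.le
  obtain ⟨A, hA⟩ := s
  rw [key0 A hA, key A hA,
    ← MeasureTheory.integral_sub (integrable_gg one_pos 0).integrableOn hHint.integrableOn]
  calc |∫ x in A, (gg 0 1 x - ∑ i, wgt i * gg (mm i) ((N:ℝ)^(-(2*p))) x)|
      ≤ ∫ x in A, |gg 0 1 x - ∑ i, wgt i * gg (mm i) ((N:ℝ)^(-(2*p))) x| := by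
        have h := MeasureTheory.norm_integral_le_integral_norm
          (μ := MeasureTheory.volume.restrict A)
          (f := fun x => gg 0 1 x - ∑ i, wgt i * gg (mm i) ((N:ℝ)^(-(2*p))) x)
        simpa [Real.norm_eq_abs] using h
    _ ≤ ∫ x, |gg 0 1 x - ∑ i, wgt i * gg (mm i) ((N:ℝ)^(-(2*p))) x| :=
        setIntegral_le_integral ((integrable_gg one_pos 0).sub hHint).abs
          (Filter.Eventually.of_forall fun x => abs_nonneg _)
    _ ≤ 4 * Real.exp (-R) + (2*R/(N:ℝ)) / Real.sqrt ((N:ℝ)^(-(2*p))) := hbound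
    _ ≤ ε := by
        rw [hquot]
        linarith
end

section
/- Let ν and ν_1, …, ν_{N} be probability measures on a measurable space, let w_1, …, w_N ≥ 0 with ∑_i w_i = 1, and set ν_mix = ∑_{i=1}^N w_i ν_i. Let Q be a measurable real-valued function with finite second moments under ν and under each ν_i, and let Q_{s,1}, …, Q_{s,N} be measurable real-valued functions with Q_{s,i} integrable with respect to ν_i. Then |E_ν[Q] − ∑_{i=1}^N w_i E_{ν_i}[Q_{s,i}]| ≤ 2 (E_ν[Q²] + E_{ν_mix}[Q²])^{1/2} · tv(ν, ν_mix)^{1/2} + ∑_{i=1}^N w_i |E_{ν_i}[Q] − E_{ν_i}[Q_{s,i}]|. -/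
open MeasureTheory
open scoped NNReal ENNReal

/-AUXSTART-/
lemma tvDist_bddAbove {α : Type*} [MeasurableSpace α] (μ ν : Measure α)
    [IsProbabilityMeasure μ] [IsProbabilityMeasure ν] :
    BddAbove (Set.range fun s : {s : Set α // MeasurableSet s} =>
      |(μ s.1).toReal - (ν s.1).toReal|) := by
  refine ⟨1, fun x hx => ?_⟩
  obtain ⟨s, rfl⟩ := hx
  have h1 : (μ s.1).toReal ≤ 1 := by
    have := ENNReal.toReal_mono (measure_ne_top μ Set.univ) (measure_mono (Set.subset_univ s.1))
    simpa using this
  have h2 : (ν s.1).toReal ≤ 1 := by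
    have := ENNReal.toReal_mono (measure_ne_top ν Set.univ) (measure_mono (Set.subset_univ s.1))
    simpa using this
  rw [abs_sub_le_iff]
  constructor <;> nlinarith [ENNReal.toReal_nonneg (a := μ s.1), ENNReal.toReal_nonneg (a := ν s.1)]

lemma tvDist_nonneg {α : Type*} [MeasurableSpace α] (μ ν : Measure α) : 0 ≤ tvDist μ ν :=
  Real.iSup_nonneg fun _ => abs_nonneg _

lemma le_tvDist {α : Type*} [MeasurableSpace α] (μ ν : Measure α)
    [IsProbabilityMeasure μ] [IsProbabilityMeasure ν] {s : Set α} (hs : MeasurableSet s) :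
    (μ s).toReal - (ν s).toReal ≤ tvDist μ ν :=
  le_trans (le_abs_self _) (le_ciSup (tvDist_bddAbove μ ν) ⟨s, hs⟩)

/-- Key inequality: difference of means bounded via total variation. -/
lemma abs_integral_sub_le_tv {α : Type*} [MeasurableSpace α] (ν μ : Measure α)
    [IsProbabilityMeasure ν] [IsProbabilityMeasure μ] (Q : α → ℝ)
    (hQν : MemLp Q 2 ν) (hQμ : MemLp Q 2 μ) :
    |(∫ x, Q x ∂ν) - ∫ x, Q x ∂μ| ≤
      Real.sqrt ((∫ x, Q x ^ 2 ∂ν) + ∫ x, Q x ^ 2 ∂μ) * Real.sqrt (2 * tvDist ν μ) := by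
  set ρ : Measure α := ν + μ with hρ
  have hνρ : ν ≪ ρ := Measure.absolutelyContinuous_of_le (Measure.le_add_right le_rfl)
  have hμρ : μ ≪ ρ := Measure.absolutelyContinuous_of_le (Measure.le_add_left le_rfl)
  set f : α → ℝ≥0∞ := ν.rnDeriv ρ with hf
  set g : α → ℝ≥0∞ := μ.rnDeriv ρ with hg
  have hf_meas : Measurable f := Measure.measurable_rnDeriv ν ρ
  have hg_meas : Measurable g := Measure.measurable_rnDeriv μ ρ
  have hf_lt : ∀ᵐ x ∂ρ, f x < ∞ := Measure.rnDeriv_lt_top ν ρ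
  have hg_lt : ∀ᵐ x ∂ρ, g x < ∞ := Measure.rnDeriv_lt_top μ ρ
  have hf1 : f ≤ᵐ[ρ] 1 := Measure.rnDeriv_le_one_of_le (Measure.le_add_right le_rfl)
  have hg1 : g ≤ᵐ[ρ] 1 := Measure.rnDeriv_le_one_of_le (Measure.le_add_left le_rfl)
  have hQsm : AEStronglyMeasurable Q ρ := by
    rw [hρ]
    exact aestronglyMeasurable_add_measure_iff.mpr ⟨hQν.aestronglyMeasurable, hQμ.aestronglyMeasurable⟩
  have hQint : Integrable Q ρ :=
    (hQν.integrable one_le_two).add_measure (hQμ.integrable one_le_two)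
  have hQ2int : Integrable (fun x => Q x ^ 2) ρ := hQν.integrable_sq.add_measure hQμ.integrable_sq
  -- the real integrand bound
  have habs : ∀ a b : ℝ≥0∞, a < ∞ → b < ∞ →
      ENNReal.ofReal |a.toReal - b.toReal| ≤ a + b := by
    intro a b ha hb
    calc ENNReal.ofReal |a.toReal - b.toReal|
        ≤ ENNReal.ofReal (a.toReal + b.toReal) := by
          refine ENNReal.ofReal_le_ofReal ?_
          have := abs_sub_abs_le_abs_sub a.toReal b.toReal
          rw [abs_sub_le_iff]
          constructor <;> nlinarith [ENNReal.toReal_nonneg (a := a), ENNReal.toReal_nonneg (a := b),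
            abs_nonneg (a.toReal - b.toReal)]
      _ = a + b := by
          rw [ENNReal.ofReal_add ENNReal.toReal_nonneg ENNReal.toReal_nonneg,
            ENNReal.ofReal_toReal ha.ne, ENNReal.ofReal_toReal hb.ne]

  set eH : α → ℝ≥0∞ := fun x => ENNReal.ofReal |(f x).toReal - (g x).toReal| with heH
  set eQ : α → ℝ≥0∞ := fun x => ENNReal.ofReal |Q x| with heQ
  have heH_meas : Measurable eH :=
    (hf_meas.ennreal_toReal.sub hg_meas.ennreal_toReal).abs.ennreal_ofReal
  have heQ_meas : AEMeasurable eQ ρ :=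
    ENNReal.measurable_ofReal.comp_aemeasurable hQsm.norm.aemeasurable
  -- Step 1: |∫Qdν − ∫Qdμ| ≤ (∫⁻ eQ * eH dρ).toReal
  have hI1 : Integrable (fun x => (f x).toReal * Q x) ρ := by
    refine Integrable.mono' hQint.abs
      ((hf_meas.ennreal_toReal.aemeasurable.aestronglyMeasurable).mul hQsm) ?_
    filter_upwards [hf1] with x hx
    have hx1 : (f x).toReal ≤ 1 := by
      have := ENNReal.toReal_mono (by simp) hx
      simpa using this
    rw [Real.norm_eq_abs, abs_mul, abs_of_nonneg ENNReal.toReal_nonneg]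
    exact mul_le_of_le_one_left (abs_nonneg _) hx1
  have hI2 : Integrable (fun x => (g x).toReal * Q x) ρ := by
    refine Integrable.mono' hQint.abs
      ((hg_meas.ennreal_toReal.aemeasurable.aestronglyMeasurable).mul hQsm) ?_
    filter_upwards [hg1] with x hx
    have hx1 : (g x).toReal ≤ 1 := by
      have := ENNReal.toReal_mono (by simp) hx
      simpa using this
    rw [Real.norm_eq_abs, abs_mul, abs_of_nonneg ENNReal.toReal_nonneg]
    exact mul_le_of_le_one_left (abs_nonneg _) hx1
  have hid : (∫ x, Q x ∂ν) - ∫ x, Q x ∂μ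
      = ∫ x, ((f x).toReal - (g x).toReal) * Q x ∂ρ := by
    have h1 : ∫ x, Q x ∂ν = ∫ x, (f x).toReal * Q x ∂ρ := by
      rw [← integral_rnDeriv_smul hνρ (f := Q)]
      simp [smul_eq_mul, hf]
    have h2 : ∫ x, Q x ∂μ = ∫ x, (g x).toReal * Q x ∂ρ := by
      rw [← integral_rnDeriv_smul hμρ (f := Q)]
      simp [smul_eq_mul, hg]
    rw [h1, h2, ← integral_sub hI1 hI2]
    congr 1 with x
    ring
  have hstep1 : |(∫ x, Q x ∂ν) - ∫ x, Q x ∂μ| ≤ (∫⁻ x, eQ x * eH x ∂ρ).toReal := by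
    rw [hid]
    calc |∫ x, ((f x).toReal - (g x).toReal) * Q x ∂ρ|
        ≤ ∫ x, |(f x).toReal - (g x).toReal| * |Q x| ∂ρ := by
          simpa [Real.norm_eq_abs, abs_mul] using
            norm_integral_le_integral_norm (μ := ρ) (fun x => ((f x).toReal - (g x).toReal) * Q x)
      _ = (∫⁻ x, eQ x * eH x ∂ρ).toReal := by
          rw [integral_eq_lintegral_of_nonneg_ae (f := fun x => |(f x).toReal - (g x).toReal| * |Q x|)
            (Filter.Eventually.of_forall fun x => mul_nonneg (abs_nonneg _) (abs_nonneg _))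
            (((hf_meas.ennreal_toReal.sub
              hg_meas.ennreal_toReal).abs.aestronglyMeasurable).mul hQsm.norm)]
          congr 1
          refine lintegral_congr fun x => ?_
          rw [ENNReal.ofReal_mul (abs_nonneg _)]
          simp only [heH, heQ]
          ring
  -- Step 2: Hölder
  have hpq : Real.HolderConjugate 2 2 := ⟨by norm_num, by norm_num, by norm_num⟩
  have hsplit : ∀ x, eQ x * eH x = (eQ x * eH x ^ (1/2 : ℝ)) * eH x ^ (1/2 : ℝ) := by
    intro x
    rw [mul_assoc, ← ENNReal.rpow_add_of_nonneg _ _ (by norm_num) (by norm_num)]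
    norm_num
  have hholder : ∫⁻ x, eQ x * eH x ∂ρ ≤
      (∫⁻ x, ENNReal.ofReal (Q x ^ 2) * eH x ∂ρ) ^ (1/2 : ℝ)
        * (∫⁻ x, eH x ∂ρ) ^ (1/2 : ℝ) := by
    have h := ENNReal.lintegral_mul_le_Lp_mul_Lq ρ hpq
      (f := fun x => eQ x * eH x ^ (1/2 : ℝ)) (g := fun x => eH x ^ (1/2 : ℝ))
      (heQ_meas.mul (heH_meas.pow_const _).aemeasurable)
      (heH_meas.pow_const _).aemeasurable
    have e1 : ∀ x, (eQ x * eH x ^ (1/2 : ℝ)) ^ (2 : ℝ) = ENNReal.ofReal (Q x ^ 2) * eH x := by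
      intro x
      rw [ENNReal.mul_rpow_of_nonneg _ _ (by norm_num : (0:ℝ) ≤ 2), ← ENNReal.rpow_mul,
        show (1/2 : ℝ) * 2 = 1 by norm_num, ENNReal.rpow_one,
        show (2:ℝ) = ((2:ℕ):ℝ) from by norm_num, ENNReal.rpow_natCast,
        ← ENNReal.ofReal_pow (abs_nonneg _), sq_abs]
    have e2 : ∀ x, (eH x ^ (1/2 : ℝ)) ^ (2 : ℝ) = eH x := by
      intro x
      rw [← ENNReal.rpow_mul, show (1/2 : ℝ) * 2 = 1 by norm_num, ENNReal.rpow_one]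
    calc ∫⁻ x, eQ x * eH x ∂ρ
        = ∫⁻ x, (fun y => eQ y * eH y ^ (1/2 : ℝ)) x * (fun y => eH y ^ (1/2 : ℝ)) x ∂ρ :=
          lintegral_congr fun x => hsplit x
      _ ≤ (∫⁻ x, (eQ x * eH x ^ (1/2 : ℝ)) ^ (2 : ℝ) ∂ρ) ^ (1/2 : ℝ)
            * (∫⁻ x, (eH x ^ (1/2 : ℝ)) ^ (2 : ℝ) ∂ρ) ^ (1/2 : ℝ) := by
          simpa using h
      _ = (∫⁻ x, ENNReal.ofReal (Q x ^ 2) * eH x ∂ρ) ^ (1/2 : ℝ)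
            * (∫⁻ x, eH x ∂ρ) ^ (1/2 : ℝ) := by
          rw [lintegral_congr e1, lintegral_congr e2]


  -- Step 3: bound the first factor
  have hQ2meas : AEMeasurable (fun x => ENNReal.ofReal (Q x ^ 2)) ρ :=
    ENNReal.measurable_ofReal.comp_aemeasurable (hQsm.aemeasurable.pow_const 2)
  have hA : ∫⁻ x, ENNReal.ofReal (Q x ^ 2) * eH x ∂ρ ≤
      ENNReal.ofReal ((∫ x, Q x ^ 2 ∂ν) + ∫ x, Q x ^ 2 ∂μ) := by
    have h1 : ∫⁻ x, ENNReal.ofReal (Q x ^ 2) * eH x ∂ρ ≤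
        ∫⁻ x, ENNReal.ofReal (Q x ^ 2) * (f x + g x) ∂ρ := by
      refine lintegral_mono_ae ?_
      filter_upwards [hf_lt, hg_lt] with x hfx hgx
      exact mul_le_mul_right (habs _ _ hfx hgx) _
    have h2 : ∫⁻ x, ENNReal.ofReal (Q x ^ 2) * (f x + g x) ∂ρ
        = (∫⁻ x, f x * ENNReal.ofReal (Q x ^ 2) ∂ρ)
          + ∫⁻ x, g x * ENNReal.ofReal (Q x ^ 2) ∂ρ := by
      rw [← lintegral_add_left' (f := fun x => f x * ENNReal.ofReal (Q x ^ 2)) (hf_meas.aemeasurable.mul hQ2meas)]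
      refine lintegral_congr fun x => ?_
      ring
    have h3 : ∫⁻ x, f x * ENNReal.ofReal (Q x ^ 2) ∂ρ = ∫⁻ x, ENNReal.ofReal (Q x ^ 2) ∂ν :=
      lintegral_rnDeriv_mul hνρ hQ2meas
    have h4 : ∫⁻ x, g x * ENNReal.ofReal (Q x ^ 2) ∂ρ = ∫⁻ x, ENNReal.ofReal (Q x ^ 2) ∂μ :=
      lintegral_rnDeriv_mul hμρ hQ2meas
    have h5 : ∫⁻ x, ENNReal.ofReal (Q x ^ 2) ∂ν = ENNReal.ofReal (∫ x, Q x ^ 2 ∂ν) :=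
      (ofReal_integral_eq_lintegral_ofReal hQν.integrable_sq
        (Filter.Eventually.of_forall fun x => sq_nonneg _)).symm
    have h6 : ∫⁻ x, ENNReal.ofReal (Q x ^ 2) ∂μ = ENNReal.ofReal (∫ x, Q x ^ 2 ∂μ) :=
      (ofReal_integral_eq_lintegral_ofReal hQμ.integrable_sq
        (Filter.Eventually.of_forall fun x => sq_nonneg _)).symm
    calc ∫⁻ x, ENNReal.ofReal (Q x ^ 2) * eH x ∂ρ
        ≤ ∫⁻ x, ENNReal.ofReal (Q x ^ 2) * (f x + g x) ∂ρ := h1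
      _ = ENNReal.ofReal (∫ x, Q x ^ 2 ∂ν) + ENNReal.ofReal (∫ x, Q x ^ 2 ∂μ) := by
          rw [h2, h3, h4, h5, h6]
      _ = ENNReal.ofReal ((∫ x, Q x ^ 2 ∂ν) + ∫ x, Q x ^ 2 ∂μ) :=
          (ENNReal.ofReal_add (integral_nonneg fun x => sq_nonneg _)
            (integral_nonneg fun x => sq_nonneg _)).symm
  -- Step 4: bound the second factor
  have hB : ∫⁻ x, eH x ∂ρ ≤ ENNReal.ofReal (2 * tvDist ν μ) := by
    set s : Set α := {x | g x ≤ f x} with hsdef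
    have hs : MeasurableSet s := measurableSet_le hg_meas hf_meas
    have hgfin : ∀ t : Set α, ∫⁻ x in t, g x ∂ρ ≠ ∞ := fun t =>
      ((Measure.setLIntegral_rnDeriv_le t).trans_lt (measure_lt_top μ t)).ne
    have hffin : ∀ t : Set α, ∫⁻ x in t, f x ∂ρ ≠ ∞ := fun t =>
      ((Measure.setLIntegral_rnDeriv_le t).trans_lt (measure_lt_top ν t)).ne
    have hB1 : ∫⁻ x in s, eH x ∂ρ ≤ ENNReal.ofReal (tvDist ν μ) := by
      have he : ∫⁻ x in s, eH x ∂ρ = ∫⁻ x in s, (f x - g x) ∂ρ := by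
        refine lintegral_congr_ae ?_
        filter_upwards [ae_restrict_of_ae hf_lt, ae_restrict_of_ae hg_lt, ae_restrict_mem hs]
          with x hfx hgx hxs
        have hle : (g x).toReal ≤ (f x).toReal := ENNReal.toReal_mono hfx.ne hxs
        simp only [heH]
        rw [abs_of_nonneg (sub_nonneg.mpr hle), ENNReal.ofReal_sub _ ENNReal.toReal_nonneg,
          ENNReal.ofReal_toReal hfx.ne, ENNReal.ofReal_toReal hgx.ne]
      rw [he, lintegral_sub hg_meas (hgfin s) ((ae_restrict_mem hs).mono fun x hx => hx),
        Measure.setLIntegral_rnDeriv hνρ s, Measure.setLIntegral_rnDeriv hμρ s]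
      refine tsub_le_iff_right.mpr ?_
      calc ν s = ENNReal.ofReal (ν s).toReal := (ENNReal.ofReal_toReal (measure_ne_top ν s)).symm
        _ ≤ ENNReal.ofReal (tvDist ν μ + (μ s).toReal) := by
            refine ENNReal.ofReal_le_ofReal ?_
            have := le_tvDist ν μ hs
            linarith
        _ = ENNReal.ofReal (tvDist ν μ) + μ s := by
            rw [ENNReal.ofReal_add (tvDist_nonneg ν μ) ENNReal.toReal_nonneg,
              ENNReal.ofReal_toReal (measure_ne_top μ s)]
    have hB2 : ∫⁻ x in sᶜ, eH x ∂ρ ≤ ENNReal.ofReal (tvDist ν μ) := by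
      have he : ∫⁻ x in sᶜ, eH x ∂ρ = ∫⁻ x in sᶜ, (g x - f x) ∂ρ := by
        refine lintegral_congr_ae ?_
        filter_upwards [ae_restrict_of_ae hf_lt, ae_restrict_of_ae hg_lt,
          ae_restrict_mem hs.compl] with x hfx hgx hxs
        have hlt : f x < g x := lt_of_not_ge (by simpa [Set.mem_compl_iff, hsdef] using hxs)
        have hle : (f x).toReal ≤ (g x).toReal := ENNReal.toReal_mono hgx.ne hlt.le
        simp only [heH]
        rw [abs_sub_comm, abs_of_nonneg (sub_nonneg.mpr hle),
          ENNReal.ofReal_sub _ ENNReal.toReal_nonneg,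
          ENNReal.ofReal_toReal hfx.ne, ENNReal.ofReal_toReal hgx.ne]
      rw [he, lintegral_sub hf_meas (hffin sᶜ)
          ((ae_restrict_mem hs.compl).mono fun x hx => (lt_of_not_ge (by simpa [Set.mem_compl_iff, hsdef] using hx)).le),
        Measure.setLIntegral_rnDeriv hνρ sᶜ, Measure.setLIntegral_rnDeriv hμρ sᶜ]
      refine tsub_le_iff_right.mpr ?_
      calc μ sᶜ = ENNReal.ofReal (μ sᶜ).toReal :=
            (ENNReal.ofReal_toReal (measure_ne_top μ sᶜ)).symm
        _ ≤ ENNReal.ofReal (tvDist ν μ + (ν sᶜ).toReal) := by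
            refine ENNReal.ofReal_le_ofReal ?_
            have h := le_ciSup (tvDist_bddAbove ν μ) (⟨sᶜ, hs.compl⟩ : {t : Set α // MeasurableSet t})
            have h2 : (μ sᶜ).toReal - (ν sᶜ).toReal ≤ |(ν sᶜ).toReal - (μ sᶜ).toReal| := by
              rw [abs_sub_comm]
              exact le_abs_self _
            have h3 : |(ν sᶜ).toReal - (μ sᶜ).toReal| ≤ tvDist ν μ := h
            linarith
        _ = ENNReal.ofReal (tvDist ν μ) + ν sᶜ := by
            rw [ENNReal.ofReal_add (tvDist_nonneg ν μ) ENNReal.toReal_nonneg,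
              ENNReal.ofReal_toReal (measure_ne_top ν sᶜ)]
    calc ∫⁻ x, eH x ∂ρ = (∫⁻ x in s, eH x ∂ρ) + ∫⁻ x in sᶜ, eH x ∂ρ :=
          (lintegral_add_compl eH hs).symm
      _ ≤ ENNReal.ofReal (tvDist ν μ) + ENNReal.ofReal (tvDist ν μ) := add_le_add hB1 hB2
      _ = ENNReal.ofReal (2 * tvDist ν μ) := by
          rw [← ENNReal.ofReal_add (tvDist_nonneg ν μ) (tvDist_nonneg ν μ), two_mul]
  -- Step 5: conclude
  have hS0 : 0 ≤ (∫ x, Q x ^ 2 ∂ν) + ∫ x, Q x ^ 2 ∂μ :=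
    add_nonneg (integral_nonneg fun x => sq_nonneg _) (integral_nonneg fun x => sq_nonneg _)
  have hT0 : 0 ≤ 2 * tvDist ν μ := mul_nonneg (by norm_num) (tvDist_nonneg ν μ)
  have hfin : ENNReal.ofReal ((∫ x, Q x ^ 2 ∂ν) + ∫ x, Q x ^ 2 ∂μ) ^ (1/2 : ℝ)
      * ENNReal.ofReal (2 * tvDist ν μ) ^ (1/2 : ℝ) ≠ ∞ :=
    ENNReal.mul_ne_top (ENNReal.rpow_ne_top_of_nonneg (by norm_num) ENNReal.ofReal_ne_top)
      (ENNReal.rpow_ne_top_of_nonneg (by norm_num) ENNReal.ofReal_ne_top)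
  have hle : ∫⁻ x, eQ x * eH x ∂ρ ≤
      ENNReal.ofReal ((∫ x, Q x ^ 2 ∂ν) + ∫ x, Q x ^ 2 ∂μ) ^ (1/2 : ℝ)
        * ENNReal.ofReal (2 * tvDist ν μ) ^ (1/2 : ℝ) :=
    hholder.trans (mul_le_mul' (ENNReal.rpow_le_rpow hA (by norm_num))
      (ENNReal.rpow_le_rpow hB (by norm_num)))
  refine hstep1.trans ?_
  calc (∫⁻ x, eQ x * eH x ∂ρ).toReal
      ≤ (ENNReal.ofReal ((∫ x, Q x ^ 2 ∂ν) + ∫ x, Q x ^ 2 ∂μ) ^ (1/2 : ℝ)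
          * ENNReal.ofReal (2 * tvDist ν μ) ^ (1/2 : ℝ)).toReal :=
        ENNReal.toReal_mono hfin hle
    _ = Real.sqrt ((∫ x, Q x ^ 2 ∂ν) + ∫ x, Q x ^ 2 ∂μ) * Real.sqrt (2 * tvDist ν μ) := by
        rw [ENNReal.toReal_mul, ← ENNReal.toReal_rpow, ← ENNReal.toReal_rpow,
          ENNReal.toReal_ofReal hS0, ENNReal.toReal_ofReal hT0,
          Real.sqrt_eq_rpow, Real.sqrt_eq_rpow]


/-AUXEND-/

/-- Error bound for the mixture Taylor approximation of the mean:
`|E_ν[Q] − ∑ᵢ wᵢ E_{νᵢ}[Q_{s,i}]|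
  ≤ 2 (E_ν[Q²] + E_{ν_mix}[Q²])^{1/2} tv(ν, ν_mix)^{1/2} + ∑ᵢ wᵢ |E_{νᵢ}[Q] − E_{νᵢ}[Q_{s,i}]|`,
where `ν_mix = ∑ᵢ wᵢ νᵢ` and `E_{ν_mix}[Q²] = ∑ᵢ wᵢ E_{νᵢ}[Q²]`. -/
theorem mixture_taylor_mean_error {α : Type*} [MeasurableSpace α]
    (ν : Measure α) [IsProbabilityMeasure ν] (N : ℕ)
    (νc : Fin N → Measure α) [∀ i, IsProbabilityMeasure (νc i)]
    (w : Fin N → ℝ) (hw : ∀ i, 0 ≤ w i) (hw1 : ∑ i, w i = 1)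
    (Q : α → ℝ) (Qs : Fin N → α → ℝ)
    (hQ : MemLp Q 2 ν) (hQi : ∀ i, MemLp Q 2 (νc i))
    (hQs : ∀ i, Integrable (Qs i) (νc i)) :
    |(∫ x, Q x ∂ν) - ∑ i, w i * ∫ x, Qs i x ∂(νc i)| ≤
      2 * Real.sqrt ((∫ x, Q x ^ 2 ∂ν) + ∑ i, w i * ∫ x, Q x ^ 2 ∂(νc i)) *
        Real.sqrt (tvDist ν (∑ i, ENNReal.ofReal (w i) • νc i)) +
      ∑ i, w i * |(∫ x, Q x ∂(νc i)) - ∫ x, Qs i x ∂(νc i)| := by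
  set μ : Measure α := ∑ i, ENNReal.ofReal (w i) • νc i with hμdef
  have hμprob : IsProbabilityMeasure μ := by
    constructor
    rw [hμdef]
    simp only [Measure.finset_sum_apply, Measure.smul_apply, smul_eq_mul, measure_univ, mul_one]
    rw [← ENNReal.ofReal_sum_of_nonneg (fun i _ => hw i), hw1, ENNReal.ofReal_one]
  have hQint_i : ∀ i, Integrable Q (νc i) := fun i => (hQi i).integrable one_le_two
  have hQμ_int : Integrable Q μ := by
    rw [hμdef]
    exact integrable_finset_sum_measure.mpr fun i _ =>
      (hQint_i i).smul_measure ENNReal.ofReal_ne_top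
  have hQ2μ_int : Integrable (fun x => Q x ^ 2) μ := by
    rw [hμdef]
    exact integrable_finset_sum_measure.mpr fun i _ =>
      (hQi i).integrable_sq.smul_measure ENNReal.ofReal_ne_top
  have hQsmμ : AEStronglyMeasurable Q μ := by
    rw [hμdef, ← Measure.sum_fintype]
    exact aestronglyMeasurable_sum_measure_iff.mpr fun i =>
      ((hQi i).aestronglyMeasurable).smul_measure _
  have hQμ : MemLp Q 2 μ := (memLp_two_iff_integrable_sq hQsmμ).mpr hQ2μ_int
  have hμQ : ∫ x, Q x ∂μ = ∑ i, w i * ∫ x, Q x ∂(νc i) := by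
    rw [hμdef, integral_finset_sum_measure
      (fun i _ => (hQint_i i).smul_measure ENNReal.ofReal_ne_top)]
    refine Finset.sum_congr rfl fun i _ => ?_
    rw [integral_smul_measure, ENNReal.toReal_ofReal (hw i), smul_eq_mul]
  have hμQ2 : ∫ x, Q x ^ 2 ∂μ = ∑ i, w i * ∫ x, Q x ^ 2 ∂(νc i) := by
    rw [hμdef, integral_finset_sum_measure
      (fun i _ => (hQi i).integrable_sq.smul_measure ENNReal.ofReal_ne_top)]
    refine Finset.sum_congr rfl fun i _ => ?_
    rw [integral_smul_measure, ENNReal.toReal_ofReal (hw i), smul_eq_mul]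
  have key := abs_integral_sub_le_tv ν μ Q hQ hQμ
  rw [hμQ2] at key
  have htri : |(∫ x, Q x ∂ν) - ∑ i, w i * ∫ x, Qs i x ∂(νc i)| ≤
      |(∫ x, Q x ∂ν) - ∫ x, Q x ∂μ|
        + ∑ i, w i * |(∫ x, Q x ∂(νc i)) - ∫ x, Qs i x ∂(νc i)| := by
    have hsplit : (∫ x, Q x ∂ν) - ∑ i, w i * ∫ x, Qs i x ∂(νc i)
        = ((∫ x, Q x ∂ν) - ∫ x, Q x ∂μ)
          + ∑ i, (w i * (∫ x, Q x ∂(νc i)) - w i * ∫ x, Qs i x ∂(νc i)) := by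
      rw [hμQ, Finset.sum_sub_distrib]
      ring
    calc |(∫ x, Q x ∂ν) - ∑ i, w i * ∫ x, Qs i x ∂(νc i)|
        ≤ |(∫ x, Q x ∂ν) - ∫ x, Q x ∂μ|
          + |∑ i, (w i * (∫ x, Q x ∂(νc i)) - w i * ∫ x, Qs i x ∂(νc i))| := by
          rw [hsplit]; exact abs_add_le _ _
      _ ≤ |(∫ x, Q x ∂ν) - ∫ x, Q x ∂μ|
          + ∑ i, w i * |(∫ x, Q x ∂(νc i)) - ∫ x, Qs i x ∂(νc i)| := by
          refine add_le_add le_rfl ?_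
          refine (Finset.abs_sum_le_sum_abs _ _).trans (Finset.sum_le_sum fun i _ => ?_)
          rw [← mul_sub, abs_mul, abs_of_nonneg (hw i)]
  refine htri.trans (add_le_add ?_ le_rfl)
  refine key.trans ?_
  have hsq2 : Real.sqrt 2 ≤ 2 := by
    nlinarith [Real.sq_sqrt (by norm_num : (0:ℝ) ≤ 2), Real.sqrt_nonneg 2]
  rw [Real.sqrt_mul (by norm_num : (0:ℝ) ≤ 2)]
  have h1 : Real.sqrt 2 * Real.sqrt (tvDist ν μ) ≤ 2 * Real.sqrt (tvDist ν μ) :=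
    mul_le_mul_of_nonneg_right hsq2 (Real.sqrt_nonneg _)
  calc Real.sqrt ((∫ x, Q x ^ 2 ∂ν) + ∑ i, w i * ∫ x, Q x ^ 2 ∂(νc i))
        * (Real.sqrt 2 * Real.sqrt (tvDist ν μ))
      ≤ Real.sqrt ((∫ x, Q x ^ 2 ∂ν) + ∑ i, w i * ∫ x, Q x ^ 2 ∂(νc i))
        * (2 * Real.sqrt (tvDist ν μ)) :=
        mul_le_mul_of_nonneg_left h1 (Real.sqrt_nonneg _)
    _ = 2 * Real.sqrt ((∫ x, Q x ^ 2 ∂ν) + ∑ i, w i * ∫ x, Q x ^ 2 ∂(νc i))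
        * Real.sqrt (tvDist ν μ) := by ring
end

section
/- Let m ~ N(m̄, C) be a Gaussian random vector on ℝⁿ with C symmetric positive definite, let c ∈ ℝ, g ∈ ℝⁿ, and let (λ_j, φ_j), j = 1, …, r (r ≤ n), satisfy the generalized eigenvalue relations A φ_j = λ_j C^{−1} φ_j for a symmetric matrix A, with C^{−1}-orthonormality ⟨φ_i, C^{−1} φ_j⟩ = δ_{ij}, and suppose ⟨g, C g⟩ − ∑_{j=1}^r ⟨g, φ_j⟩² ≥ 0. Then the random variable Q(m) = c + ⟨g, m − m̄⟩ + (1/2) ∑_{j=1}^r λ_j ⟨C^{−1} φ_j, m − m̄⟩² has the same distribution as c + (⟨g, C g⟩ − ∑_{j=1}^r ⟨g, φ_j⟩²)^{1/2} · y₀ + ∑_{j=1}^r ( ⟨g, φ_j⟩ y_j + (1/2) λ_j y_j² ), where y₀, y₁, …, y_r are independent standard normal random variables. -/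
open MeasureTheory ProbabilityTheory Matrix
open scoped NNReal ENNReal

/-- The Gaussian measure `N(m, C)` on `ℝⁿ` with mean `m` and (positive semidefinite)
covariance matrix `C`, realized as the pushforward of the standard Gaussian under
`x ↦ m + C^{1/2} x` (junk value `0` if `C` is not positive semidefinite). -/
noncomputable def gaussianPi {n : ℕ} (m : Fin n → ℝ) (C : Matrix (Fin n) (Fin n) ℝ) :
    Measure (Fin n → ℝ) :=
  haveI := Classical.propDecidable C.PosSemidef
  if h : C.PosSemidef then
    Measure.map (fun x => m + ((h.1.eigenvectorUnitary : Matrix (Fin n) (Fin n) ℝ) *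
      diagonal (Real.sqrt ∘ h.1.eigenvalues) *
      (star h.1.eigenvectorUnitary : Matrix (Fin n) (Fin n) ℝ)).mulVec x) (Measure.pi fun _ => gaussianReal 0 1)
  else 0


lemma lintegral_fin_prod {k : ℕ} (μ : Fin k → Measure ℝ) [∀ i, SigmaFinite (μ i)]
    (f : Fin k → ℝ → ℝ≥0∞) (hf : ∀ i, Measurable (f i)) :
    ∫⁻ x, ∏ i, f i (x i) ∂(Measure.pi μ) = ∏ i, ∫⁻ t, f i t ∂(μ i) := by
  induction k with
  | zero => simp
  | succ m ih =>
    have hmp := measurePreserving_piFinSuccAbove μ 0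
    have hmeas : Measurable fun p : ℝ × (Fin m → ℝ) =>
        f 0 p.1 * ∏ i : Fin m, f i.succ (p.2 i) :=
      ((hf 0).comp measurable_fst).mul
        (Finset.measurable_prod _ fun i _ => (hf i.succ).comp ((measurable_pi_apply i).comp measurable_snd))
    have h1 : ∫⁻ x, ∏ i, f i (x i) ∂(Measure.pi μ)
        = ∫⁻ p : ℝ × (Fin m → ℝ), f 0 p.1 * ∏ i : Fin m, f i.succ (p.2 i)
            ∂((μ 0).prod (Measure.pi fun j => μ (Fin.succAbove 0 j))) := by
      rw [← hmp.lintegral_comp hmeas]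
      refine lintegral_congr fun x => ?_
      simp [MeasurableEquiv.piFinSuccAbove, Fin.prod_univ_succ, Fin.zero_succAbove, Fin.tail]
    rw [h1, lintegral_prod_mul (f := f 0)
      (g := fun y : Fin m → ℝ => ∏ i : Fin m, f i.succ (y i)) ((hf 0).aemeasurable)
      (Finset.measurable_prod _ fun i _ => (hf i.succ).comp (measurable_pi_apply i)).aemeasurable]
    have h2 : (Measure.pi fun j : Fin m => μ (Fin.succAbove 0 j))
        = Measure.pi fun j : Fin m => μ j.succ := by
      congr 1
    rw [h2, ih _ _ fun i => hf i.succ, Fin.prod_univ_succ]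


lemma gaussPi_eq_withDensity (k : ℕ) :
    (Measure.pi fun _ : Fin k => gaussianReal 0 1)
      = (volume : Measure (Fin k → ℝ)).withDensity
          (fun x => ∏ i, gaussianPDF 0 1 (x i)) := by
  refine Measure.pi_eq fun s hs => ?_
  rw [withDensity_apply _ (MeasurableSet.univ_pi hs)]
  have hind : ∀ x : Fin k → ℝ, (Set.pi Set.univ s).indicator
        (fun x => ∏ i, gaussianPDF 0 1 (x i)) x
      = ∏ i, (s i).indicator (gaussianPDF 0 1) (x i) := by
    intro x
    by_cases hx : x ∈ Set.pi Set.univ s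
    · rw [Set.indicator_of_mem hx]
      exact Finset.prod_congr rfl fun i _ =>
        (Set.indicator_of_mem (hx i (Set.mem_univ i)) _).symm
    · rw [Set.indicator_of_notMem hx]
      rw [Set.mem_univ_pi] at hx
      push_neg at hx
      obtain ⟨i, hi⟩ := hx
      exact (Finset.prod_eq_zero (Finset.mem_univ i)
        (by rw [Set.indicator_of_notMem hi])).symm
  rw [← lintegral_indicator (MeasurableSet.univ_pi hs)]
  simp_rw [hind]
  rw [volume_pi, lintegral_fin_prod _ _
    (fun i => (measurable_gaussianPDF 0 1).indicator (hs i))]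
  exact Finset.prod_congr rfl fun i _ => by
    rw [lintegral_indicator (hs i), ← gaussianReal_apply 0 one_ne_zero (s i)]

lemma map_withDensity_comp {α β : Type*} [MeasurableSpace α] [MeasurableSpace β]
    (μ : Measure α) {T : α → β} (hT : Measurable T) {g : β → ℝ≥0∞} (hg : Measurable g) :
    Measure.map T (μ.withDensity (g ∘ T)) = (Measure.map T μ).withDensity g := by
  ext s hs
  rw [Measure.map_apply hT hs, withDensity_apply _ (hT hs), withDensity_apply _ hs,
    setLIntegral_map hs hg hT]
  rfl


lemma gaussPDF_prod_comp {k : ℕ} (M : Matrix (Fin k) (Fin k) ℝ) (hM : Mᵀ * M = 1)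
    (x : Fin k → ℝ) :
    (∏ i, gaussianPDF 0 1 (M.mulVec x i)) = ∏ i, gaussianPDF 0 1 (x i) := by
  have hnorm : ∑ i, M.mulVec x i ^ 2 = ∑ i, x i ^ 2 := by
    have h1 : M.mulVec x ⬝ᵥ M.mulVec x = x ⬝ᵥ x := by
      rw [dotProduct_mulVec, ← mulVec_transpose, mulVec_mulVec, hM, one_mulVec]
    simpa [dotProduct, sq] using h1
  have key : ∀ y : Fin k → ℝ, (∏ i, gaussianPDF 0 1 (y i))
      = ENNReal.ofReal ((Real.sqrt (2 * Real.pi))⁻¹ ^ k * Real.exp (-(∑ i, y i ^ 2) / 2)) := by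
    intro y
    simp only [gaussianPDF]
    rw [← ENNReal.ofReal_prod_of_nonneg (fun i _ => gaussianPDFReal_nonneg 0 1 (y i))]
    · congr 1
      simp only [gaussianPDFReal]
      rw [Finset.prod_mul_distrib, Finset.prod_const, ← Real.exp_sum]
      congr 1
      · norm_num
      · simp only [sub_zero, NNReal.coe_one, mul_one]
        rw [← Finset.sum_div, ← Finset.sum_neg_distrib]
  rw [key, key, hnorm]

lemma map_rot_gaussPi {k : ℕ} (M : Matrix (Fin k) (Fin k) ℝ) (hM : M * Mᵀ = 1) :
    Measure.map (M.mulVec) (Measure.pi fun _ : Fin k => gaussianReal 0 1)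
      = Measure.pi fun _ : Fin k => gaussianReal 0 1 := by
  have hM' : Mᵀ * M = 1 := mul_eq_one_comm.mp hM
  have hdet : M.det ≠ 0 := by
    intro h
    have := congrArg Matrix.det hM
    rw [det_mul, det_transpose, h, mul_zero, det_one] at this
    exact zero_ne_one this
  have hmeas : Measurable (M.mulVec) := by
    have : Continuous (M.mulVec) := by
      have := (Matrix.mulVecLin M).continuous_of_finiteDimensional
      exact this
    exact this.measurable
  have hg : Measurable fun x : Fin k → ℝ => ∏ i, gaussianPDF 0 1 (x i) :=
    Finset.measurable_prod _ fun i _ =>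
      (measurable_gaussianPDF 0 1).comp (measurable_pi_apply i)
  rw [gaussPi_eq_withDensity]
  have hcomp : (fun x : Fin k → ℝ => ∏ i, gaussianPDF 0 1 (x i))
      = (fun x : Fin k → ℝ => ∏ i, gaussianPDF 0 1 (x i)) ∘ M.mulVec := by
    funext x
    exact (gaussPDF_prod_comp M hM' x).symm
  conv_lhs => rw [hcomp]
  rw [map_withDensity_comp _ hmeas hg]
  have hvol : Measure.map (M.mulVec) (volume : Measure (Fin k → ℝ)) = volume := by
    have h := Real.map_matrix_volume_pi_eq_smul_volume_pi hdet
    have habs : |M.det| = 1 := by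
      have hd := congrArg Matrix.det hM
      rw [det_mul, det_transpose, det_one] at hd
      have h1 : |M.det| ^ 2 = 1 := by rw [sq_abs, sq, hd]
      nlinarith [abs_nonneg M.det]
    have h2 : ⇑(Matrix.toLin' M) = M.mulVec := funext fun x => Matrix.toLin'_apply M x
    rw [h2] at h
    rw [h, abs_inv, habs]
    norm_num
  rw [hvol]

lemma map_proj_gaussPi {k m : ℕ} (e : Fin k → Fin m) (he : Function.Injective e) :
    Measure.map (fun x : Fin m → ℝ => x ∘ e) (Measure.pi fun _ : Fin m => gaussianReal 0 1)
      = Measure.pi fun _ : Fin k => gaussianReal 0 1 := by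
  have hmeas : Measurable fun x : Fin m → ℝ => x ∘ e :=
    measurable_pi_lambda _ fun j => measurable_pi_apply (e j)
  refine (Measure.pi_eq fun s hs => ?_).symm
  rw [Measure.map_apply hmeas (MeasurableSet.univ_pi hs)]
  have hpre : (fun x : Fin m → ℝ => x ∘ e) ⁻¹' Set.pi Set.univ s
      = Set.pi Set.univ (fun i => ⋂ (j : Fin k) (_ : e j = i), s j) := by
    ext x
    simp only [Set.mem_preimage, Set.mem_univ_pi, Set.mem_iInter, Function.comp_apply]
    constructor
    · rintro h i j rfl; exact h j
    · intro h j; exact h (e j) j rfl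
  rw [hpre, Measure.pi_pi]
  have ht : ∀ j : Fin k, (⋂ (j' : Fin k) (_ : e j' = e j), s j') = s j := by
    intro j
    apply Set.eq_of_subset_of_subset
    · exact Set.iInter_subset_of_subset j (by simp)
    · intro x hx
      simp only [Set.mem_iInter]
      rintro j' hj'
      rw [he hj']; exact hx
  have hone : ∀ i : Fin m, i ∉ Finset.univ.image e →
      (gaussianReal 0 1) (⋂ (j : Fin k) (_ : e j = i), s j) = 1 := by
    intro i hi
    have : (⋂ (j : Fin k) (_ : e j = i), s j) = Set.univ := by
      apply Set.eq_univ_of_forall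
      intro x
      simp only [Set.mem_iInter]
      intro j hj
      exact absurd (Finset.mem_image.mpr ⟨j, Finset.mem_univ j, hj⟩) hi
    rw [this]
    exact measure_univ
  rw [← Finset.prod_subset (Finset.subset_univ (Finset.univ.image e)) (fun i _ hi => hone i hi)]
  rw [Finset.prod_image (fun a _ b _ h => he h)]
  exact Finset.prod_congr rfl fun j _ => by rw [ht j]


lemma map_coords_gaussPi {k n : ℕ} (hk : k ≤ n) (u : Fin k → Fin n → ℝ)
    (hu : ∀ i j, u i ⬝ᵥ u j = if i = j then (1 : ℝ) else 0) :
    Measure.map (fun x : Fin n → ℝ => fun j : Fin k => u j ⬝ᵥ x)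
        (Measure.pi fun _ : Fin n => gaussianReal 0 1)
      = Measure.pi fun _ : Fin k => gaussianReal 0 1 := by
  classical
  let v : Fin n → EuclideanSpace ℝ (Fin n) := fun i =>
    if h : (i : ℕ) < k then (EuclideanSpace.equiv (Fin n) ℝ).symm (u ⟨i, h⟩) else 0
  have hinner : ∀ a b : Fin n → ℝ,
      (inner ℝ ((EuclideanSpace.equiv (Fin n) ℝ).symm a)
        ((EuclideanSpace.equiv (Fin n) ℝ).symm b) : ℝ) = a ⬝ᵥ b := by
    intro a b
    simp [PiLp.inner_apply, dotProduct, RCLike.inner_apply, mul_comm]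
  have hvon : Orthonormal ℝ (Set.restrict {i : Fin n | (i : ℕ) < k} v) := by
    rw [orthonormal_iff_ite]
    rintro ⟨i, hi⟩ ⟨j, hj⟩
    change inner ℝ (v i) (v j) = _
    simp only [Set.restrict_apply, v]
    rw [dif_pos (show (i:ℕ) < k from hi), dif_pos (show (j:ℕ) < k from hj), hinner,
      hu ⟨i, hi⟩ ⟨j, hj⟩]
    congr 1
    simp [Fin.ext_iff, Subtype.ext_iff]
  obtain ⟨b, hb⟩ := hvon.exists_orthonormalBasis_extension_of_card_eq
    (by simp) (v := v)
  let M : Matrix (Fin n) (Fin n) ℝ := Matrix.of fun i j => b i j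
  have hM : M * Mᵀ = 1 := by
    ext i l
    have hbil : (inner ℝ (b i) (b l) : ℝ) = if i = l then 1 else 0 :=
      orthonormal_iff_ite.mp b.orthonormal i l
    rw [Matrix.mul_apply, Matrix.one_apply, ← hbil, PiLp.inner_apply]
    simp [M, RCLike.inner_apply, mul_comm]
  have hcomp : (fun x : Fin n → ℝ => fun j : Fin k => u j ⬝ᵥ x)
      = (fun y : Fin n → ℝ => y ∘ Fin.castLE hk) ∘ M.mulVec := by
    funext x
    funext j
    have hmem : (Fin.castLE hk j : Fin n) ∈ {i : Fin n | (i : ℕ) < k} := j.isLt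
    have hbj : b (Fin.castLE hk j) = v (Fin.castLE hk j) := hb _ hmem
    have hv : v (Fin.castLE hk j) = (EuclideanSpace.equiv (Fin n) ℝ).symm (u j) := by
      simp only [v, dif_pos (show ((Fin.castLE hk j : Fin n) : ℕ) < k from j.isLt)]
      congr
    simp only [Function.comp_apply, Matrix.mulVec, M]
    rw [show (Matrix.of fun i j => b i j) (Fin.castLE hk j) = fun l => b (Fin.castLE hk j) l from rfl]
    rw [hbj, hv]
    simp [dotProduct, mul_comm]
  have hproj : Measurable fun y : Fin n → ℝ => y ∘ Fin.castLE hk :=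
    measurable_pi_lambda _ fun j => measurable_pi_apply _
  have hmul : Measurable M.mulVec :=
    (Matrix.mulVecLin M).continuous_of_finiteDimensional.measurable
  rw [hcomp, ← Measure.map_map hproj hmul, map_rot_gaussPi M hM,
    map_proj_gaussPi _ (Fin.castLE_injective hk)]

lemma card_le_of_dot_orthonormal {k n : ℕ} (u : Fin k → Fin n → ℝ)
    (hu : ∀ i j, u i ⬝ᵥ u j = if i = j then (1 : ℝ) else 0) : k ≤ n := by
  classical
  let v : Fin k → EuclideanSpace ℝ (Fin n) :=
    fun i => (EuclideanSpace.equiv (Fin n) ℝ).symm (u i)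
  have hv : Orthonormal ℝ v := by
    rw [orthonormal_iff_ite]
    intro i j
    have : (inner ℝ (v i) (v j) : ℝ) = u i ⬝ᵥ u j := by
      simp [v, PiLp.inner_apply, RCLike.inner_apply, dotProduct, mul_comm]
    rw [this, hu i j]
  have := hv.linearIndependent.fintype_card_le_finrank
  simpa using this



lemma meas_dot {n : ℕ} (v : Fin n → ℝ) : Measurable fun x : Fin n → ℝ => v ⬝ᵥ x :=
  Finset.measurable_sum _ fun i _ => measurable_const.mul (measurable_pi_apply i)

lemma sum_dot {ι : Type*} [Fintype ι] {n : ℕ} (f : ι → Fin n → ℝ) (x : Fin n → ℝ) :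
    (∑ j, f j) ⬝ᵥ x = ∑ j, f j ⬝ᵥ x := by
  simp only [dotProduct, Finset.sum_apply, Finset.sum_mul]
  exact Finset.sum_comm

lemma dot_symm {n : ℕ} {S : Matrix (Fin n) (Fin n) ℝ} (hS : Sᵀ = S) (p x : Fin n → ℝ) :
    p ⬝ᵥ S.mulVec x = S.mulVec p ⬝ᵥ x := by
  rw [dotProduct_mulVec, ← mulVec_transpose, hS]

/-- Distributional representation of the (low-rank) quadratic form of a Gaussian vector:
for `m ~ N(m̄, C)` and generalized eigenpairs `A φ_j = λ_j C⁻¹ φ_j` with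
`⟨φ_i, C⁻¹ φ_j⟩ = δ_{ij}`, the random variable
`Q(m) = c + ⟨g, m − m̄⟩ + ½ ∑_j λ_j ⟨C⁻¹φ_j, m − m̄⟩²`
has the same law as
`c + (⟨g, Cg⟩ − ∑_j ⟨g, φ_j⟩²)^{1/2} y₀ + ∑_j (⟨g, φ_j⟩ y_j + ½ λ_j y_j²)`
where `y₀, y₁, …, y_r` are i.i.d. standard normal. -/
theorem lowrank_quadratic_sampling {n r : ℕ} (hr : r ≤ n) (mbar : Fin n → ℝ)
    (C : Matrix (Fin n) (Fin n) ℝ) (hC : C.PosDef)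
    (A : Matrix (Fin n) (Fin n) ℝ) (hA : A.IsSymm)
    (c : ℝ) (g : Fin n → ℝ) (lam : Fin r → ℝ) (φ : Fin r → Fin n → ℝ)
    (heig : ∀ j, A.mulVec (φ j) = lam j • C⁻¹.mulVec (φ j))
    (horth : ∀ i j, φ i ⬝ᵥ C⁻¹.mulVec (φ j) = if i = j then (1 : ℝ) else 0)
    (hnn : 0 ≤ g ⬝ᵥ C.mulVec g - ∑ j, (g ⬝ᵥ φ j) ^ 2) :
    Measure.map
      (fun m : Fin n → ℝ =>
        c + g ⬝ᵥ (m - mbar) +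
          (1 / 2) * ∑ j, lam j * (C⁻¹.mulVec (φ j) ⬝ᵥ (m - mbar)) ^ 2)
      (gaussianPi mbar C) =
    Measure.map
      (fun y : Fin (r + 1) → ℝ =>
        c + Real.sqrt (g ⬝ᵥ C.mulVec g - ∑ j, (g ⬝ᵥ φ j) ^ 2) * y 0 +
          ∑ j : Fin r, ((g ⬝ᵥ φ j) * y j.succ + (1 / 2) * lam j * (y j.succ) ^ 2))
      (Measure.pi fun _ : Fin (r + 1) => gaussianReal 0 1) := by
  classical
  have hpsd := hC.posSemidef
  set R := ((hpsd.1.eigenvectorUnitary : Matrix (Fin n) (Fin n) ℝ) *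
      diagonal (Real.sqrt ∘ hpsd.1.eigenvalues) *
      (star hpsd.1.eigenvectorUnitary : Matrix (Fin n) (Fin n) ℝ)) with hRdef
  have hRR : R * R = C := by
    conv_rhs => rw [hpsd.1.spectral_theorem]
    rw [Unitary.conjStarAlgAut_apply, hRdef]
    have hUU : (star hpsd.1.eigenvectorUnitary : Matrix (Fin n) (Fin n) ℝ) * (hpsd.1.eigenvectorUnitary : Matrix (Fin n) (Fin n) ℝ) = 1 := Unitary.coe_star_mul_self _
    have hD : diagonal (Real.sqrt ∘ hpsd.1.eigenvalues) * diagonal (Real.sqrt ∘ hpsd.1.eigenvalues) = diagonal (RCLike.ofReal ∘ hpsd.1.eigenvalues) := by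
      rw [diagonal_mul_diagonal]
      congr 1
      funext i
      simp [Real.mul_self_sqrt (hpsd.eigenvalues_nonneg i)]
    calc _ = (hpsd.1.eigenvectorUnitary : Matrix (Fin n) (Fin n) ℝ) * diagonal (Real.sqrt ∘ hpsd.1.eigenvalues) * ((star hpsd.1.eigenvectorUnitary : Matrix (Fin n) (Fin n) ℝ) * (hpsd.1.eigenvectorUnitary : Matrix (Fin n) (Fin n) ℝ)) * diagonal (Real.sqrt ∘ hpsd.1.eigenvalues) * (star hpsd.1.eigenvectorUnitary : Matrix (Fin n) (Fin n) ℝ) := by simp only [Matrix.mul_assoc]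
      _ = _ := by rw [hUU, Matrix.mul_one, Matrix.mul_assoc _ (diagonal _) (diagonal _), hD]
  have hRsymm : Rᵀ = R := by
    rw [← Matrix.conjTranspose_eq_transpose_of_trivial, hRdef]
    rw [Matrix.conjTranspose_mul, Matrix.conjTranspose_mul, Matrix.star_eq_conjTranspose,
      Matrix.conjTranspose_conjTranspose, Matrix.diagonal_conjTranspose, star_trivial,
      Matrix.mul_assoc]
  have hCsymm : Cᵀ = C := by
    rw [← Matrix.conjTranspose_eq_transpose_of_trivial]; exact hC.1
  have hCinvsymm : (C⁻¹)ᵀ = C⁻¹ := by rw [Matrix.transpose_nonsing_inv, hCsymm]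
  have hCu : IsUnit C.det := hC.det_pos.ne'.isUnit
  have hCCinv : C * C⁻¹ = 1 := Matrix.mul_nonsing_inv _ hCu
  -- the vectors
  set ψ : Fin r → Fin n → ℝ := fun j => R.mulVec (C⁻¹.mulVec (φ j)) with hψdef
  set vv : Fin n → ℝ := R.mulVec g with hvvdef
  set w : Fin n → ℝ := vv - ∑ j, (g ⬝ᵥ φ j) • ψ j with hwdef
  have hRRφ : ∀ j, R.mulVec (ψ j) = φ j := by
    intro j
    rw [hψdef]
    rw [Matrix.mulVec_mulVec, hRR, Matrix.mulVec_mulVec, hCCinv, Matrix.one_mulVec]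
  have hψψ : ∀ i j, ψ i ⬝ᵥ ψ j = if i = j then (1 : ℝ) else 0 := by
    intro i j
    rw [← dot_symm hRsymm (C⁻¹.mulVec (φ i)) (ψ j), hRRφ j,
      ← dot_symm hCinvsymm (φ i)]
    exact horth i j
  have hvψ : ∀ j, vv ⬝ᵥ ψ j = g ⬝ᵥ φ j := by
    intro j
    rw [hvvdef, ← dot_symm hRsymm g (ψ j), hRRφ j]
  have hvv : vv ⬝ᵥ vv = g ⬝ᵥ C.mulVec g := by
    rw [hvvdef, ← dot_symm hRsymm g (R.mulVec g), Matrix.mulVec_mulVec, hRR]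
  have hwx : ∀ x, w ⬝ᵥ x = vv ⬝ᵥ x - ∑ j, (g ⬝ᵥ φ j) * (ψ j ⬝ᵥ x) := by
    intro x
    calc w ⬝ᵥ x = (vv - ∑ j, (g ⬝ᵥ φ j) • ψ j) ⬝ᵥ x := by rw [hwdef]
      _ = vv ⬝ᵥ x - (∑ j, (g ⬝ᵥ φ j) • ψ j) ⬝ᵥ x := sub_dotProduct _ _ _
      _ = vv ⬝ᵥ x - ∑ j, ((g ⬝ᵥ φ j) • ψ j) ⬝ᵥ x := by
           rw [sum_dot (fun j => (g ⬝ᵥ φ j) • ψ j) x]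
      _ = vv ⬝ᵥ x - ∑ j, (g ⬝ᵥ φ j) * (ψ j ⬝ᵥ x) := by
           refine congrArg _ (Finset.sum_congr rfl fun j _ => ?_)
           rw [smul_dotProduct, smul_eq_mul]
  have hwψ : ∀ j, w ⬝ᵥ ψ j = 0 := by
    intro j
    rw [hwx, hvψ]
    have e2 : ∑ i, (g ⬝ᵥ φ i) * (ψ i ⬝ᵥ ψ j) = ∑ i, if i = j then g ⬝ᵥ φ i else 0 :=
      Finset.sum_congr rfl fun i _ => by rw [hψψ i j, mul_ite, mul_one, mul_zero]
    rw [e2, Finset.sum_ite_eq' Finset.univ j _, if_pos (Finset.mem_univ j), sub_self]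
  have hww : w ⬝ᵥ w = g ⬝ᵥ C.mulVec g - ∑ j, (g ⬝ᵥ φ j) ^ 2 := by
    have e : ∀ x, x ⬝ᵥ w = x ⬝ᵥ vv - ∑ j, (g ⬝ᵥ φ j) * (x ⬝ᵥ ψ j) := by
      intro x
      rw [dotProduct_comm x w, hwx, dotProduct_comm vv x]
      congr 1
      exact Finset.sum_congr rfl fun j _ => by rw [dotProduct_comm (ψ j) x]
    have h1 : w ⬝ᵥ w = w ⬝ᵥ vv := by
      rw [e w]
      simp only [hwψ, mul_zero, Finset.sum_const_zero, sub_zero]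
    rw [h1, hwx vv, hvv]
    congr 1
    exact Finset.sum_congr rfl fun j _ => by
      rw [dotProduct_comm (ψ j) vv, hvψ j, sq]
  -- unfold gaussianPi and compose with affine map
  rw [gaussianPi, dif_pos hpsd]
  have hQmeas : Measurable (fun m : Fin n → ℝ =>
      c + g ⬝ᵥ (m - mbar) +
        (1 / 2) * ∑ j, lam j * (C⁻¹.mulVec (φ j) ⬝ᵥ (m - mbar)) ^ 2) := by
    have hsub : Measurable fun m : Fin n → ℝ => m - mbar :=
      measurable_id.sub measurable_const
    exact ((measurable_const.add ((meas_dot g).comp hsub)).add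
      ((Finset.measurable_sum _ fun j _ =>
        ((((meas_dot (C⁻¹.mulVec (φ j))).comp hsub).pow measurable_const)).const_mul
          (lam j)).const_mul _))
  have haff : Measurable fun x : Fin n → ℝ => mbar + R.mulVec x :=
    measurable_const.add (Matrix.mulVecLin R).continuous_of_finiteDimensional.measurable
  rw [Measure.map_map hQmeas haff]
  -- the composed function only involves vv and ψ
  have hcompQ : ((fun m : Fin n → ℝ =>
      c + g ⬝ᵥ (m - mbar) +
        (1 / 2) * ∑ j, lam j * (C⁻¹.mulVec (φ j) ⬝ᵥ (m - mbar)) ^ 2)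
      ∘ (fun x : Fin n → ℝ => mbar + R.mulVec x))
      = fun x : Fin n → ℝ =>
        c + vv ⬝ᵥ x + (1 / 2) * ∑ j, lam j * (ψ j ⬝ᵥ x) ^ 2 := by
    funext x
    have h0 : mbar + R.mulVec x - mbar = R.mulVec x := by ring
    simp only [Function.comp_apply, h0, hvvdef, hψdef]
    rw [dot_symm hRsymm g x]
    refine congrArg (HAdd.hAdd _) (congrArg (HMul.hMul ((1:ℝ)/2)) ?_)
    exact Finset.sum_congr rfl fun j _ => by
      rw [dot_symm hRsymm (C⁻¹.mulVec (φ j)) x]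
  rw [hcompQ]
  rcases eq_or_lt_of_le hnn with hs2 | hs2
  · -- degenerate case : sqrt term vanishes
    have hs0 : Real.sqrt (g ⬝ᵥ C.mulVec g - ∑ j, (g ⬝ᵥ φ j) ^ 2) = 0 := by
      rw [← hs2, Real.sqrt_zero]
    have hw0 : w = 0 := by
      have h2 : w ⬝ᵥ w = 0 := by rw [hww, ← hs2]
      funext i
      have hsum : ∑ i, w i * w i = 0 := h2
      have := (Finset.sum_eq_zero_iff_of_nonneg
        (fun i _ => mul_self_nonneg (w i))).mp hsum i (Finset.mem_univ i)
      have := mul_self_eq_zero.mp this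
      simpa using this
    have hvx : ∀ x, vv ⬝ᵥ x = ∑ j, (g ⬝ᵥ φ j) * (ψ j ⬝ᵥ x) := by
      intro x
      have := hwx x
      rw [hw0] at this
      simp only [zero_dotProduct] at this
      linarith [this]
    set G : (Fin r → ℝ) → ℝ := fun z =>
      c + ∑ j, ((g ⬝ᵥ φ j) * z j + (1 / 2) * lam j * z j ^ 2) with hGdef
    have hGmeas : Measurable G :=
      measurable_const.add (Finset.measurable_sum _ fun j _ =>
        ((measurable_pi_apply j).const_mul _).add
          (((measurable_pi_apply j).pow measurable_const).const_mul _))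
    have h1 : (fun x : Fin n → ℝ =>
        c + vv ⬝ᵥ x + (1 / 2) * ∑ j, lam j * (ψ j ⬝ᵥ x) ^ 2)
        = G ∘ (fun x : Fin n → ℝ => fun j : Fin r => ψ j ⬝ᵥ x) := by
      funext x
      have hS : (1/2 : ℝ) * ∑ j, lam j * (ψ j ⬝ᵥ x) ^ 2
          = ∑ j, (1/2 : ℝ) * lam j * (ψ j ⬝ᵥ x) ^ 2 := by
        rw [Finset.mul_sum]
        exact Finset.sum_congr rfl fun j _ => (mul_assoc _ _ _).symm
      simp only [Function.comp_apply, hGdef, hvx x, hS, Finset.sum_add_distrib]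
      ring
    have h2 : (fun y : Fin (r + 1) → ℝ =>
        c + Real.sqrt (g ⬝ᵥ C.mulVec g - ∑ j, (g ⬝ᵥ φ j) ^ 2) * y 0 +
          ∑ j : Fin r, ((g ⬝ᵥ φ j) * y j.succ + (1 / 2) * lam j * (y j.succ) ^ 2))
        = G ∘ (fun y : Fin (r + 1) → ℝ => y ∘ Fin.succ) := by
      funext y
      simp only [Function.comp_apply, hGdef, hs0, zero_mul, add_zero]
    rw [h1, h2,
      ← Measure.map_map hGmeas (measurable_pi_lambda _ fun j => meas_dot (ψ j)),
      ← Measure.map_map hGmeas (measurable_pi_lambda _ fun j => measurable_pi_apply _),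
      map_coords_gaussPi hr ψ hψψ, map_proj_gaussPi Fin.succ (Fin.succ_injective r)]
  · -- nondegenerate case
    set s2 : ℝ := g ⬝ᵥ C.mulVec g - ∑ j, (g ⬝ᵥ φ j) ^ 2 with hs2def
    have hs2pos : 0 < s2 := hs2
    set s : ℝ := Real.sqrt s2 with hsdef
    have hspos : 0 < s := Real.sqrt_pos.mpr hs2pos
    have hss : s * s = s2 := Real.mul_self_sqrt hs2pos.le
    set u : Fin (r + 1) → Fin n → ℝ := fun i => Fin.cases (s⁻¹ • w) ψ i with hudef
    have hu : ∀ i j, u i ⬝ᵥ u j = if i = j then (1 : ℝ) else 0 := by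
      intro i j
      induction i using Fin.cases with
      | zero =>
        induction j using Fin.cases with
        | zero =>
          simp only [hudef, Fin.cases_zero, if_pos rfl]
          rw [smul_dotProduct, dotProduct_smul, hww, smul_eq_mul, smul_eq_mul]
          field_simp
          rw [if_pos trivial]
          nlinarith [hss]
        | succ j =>
          simp only [hudef, Fin.cases_zero, Fin.cases_succ]
          rw [smul_dotProduct, smul_eq_mul, hwψ j, mul_zero,
            if_neg (Fin.succ_ne_zero j).symm]
      | succ i =>
        induction j using Fin.cases with
        | zero =>
          simp only [hudef, Fin.cases_zero, Fin.cases_succ]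
          rw [dotProduct_smul, smul_eq_mul, dotProduct_comm (ψ i) w, hwψ i, mul_zero,
            if_neg (Fin.succ_ne_zero i)]
        | succ j =>
          simp only [hudef, Fin.cases_succ]
          rw [hψψ i j]
          congr 1
          simp [Fin.succ_inj]
    have hk : r + 1 ≤ n := card_le_of_dot_orthonormal u hu
    have hRHSmeas : Measurable (fun y : Fin (r + 1) → ℝ =>
        c + s * y 0 + ∑ j : Fin r, ((g ⬝ᵥ φ j) * y j.succ
          + (1 / 2) * lam j * (y j.succ) ^ 2)) := by
      fun_prop
    have h1 : (fun x : Fin n → ℝ =>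
        c + vv ⬝ᵥ x + (1 / 2) * ∑ j, lam j * (ψ j ⬝ᵥ x) ^ 2)
        = (fun y : Fin (r + 1) → ℝ =>
            c + s * y 0 + ∑ j : Fin r, ((g ⬝ᵥ φ j) * y j.succ
              + (1 / 2) * lam j * (y j.succ) ^ 2))
          ∘ (fun x : Fin n → ℝ => fun i : Fin (r + 1) => u i ⬝ᵥ x) := by
      funext x
      simp only [Function.comp_apply, hudef, Fin.cases_zero, Fin.cases_succ]
      have hu0 : s * ((s⁻¹ • w) ⬝ᵥ x) = w ⬝ᵥ x := by
        rw [smul_dotProduct, smul_eq_mul, ← mul_assoc, mul_inv_cancel₀ hspos.ne', one_mul]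
      have hS : (1/2 : ℝ) * ∑ j, lam j * (ψ j ⬝ᵥ x) ^ 2
          = ∑ j, (1/2 : ℝ) * lam j * (ψ j ⬝ᵥ x) ^ 2 := by
        rw [Finset.mul_sum]
        exact Finset.sum_congr rfl fun j _ => (mul_assoc _ _ _).symm
      rw [hu0, hwx x, Finset.sum_add_distrib, hS]
      ring
    rw [h1, ← Measure.map_map hRHSmeas (measurable_pi_lambda _ fun i => meas_dot (u i)),
      map_coords_gaussPi hk u hu]
end

section
/- Let (λ_k)_{k≥1} be a nonincreasing summable sequence of nonnegative reals (λ_1 ≥ λ_2 ≥ … ≥ 0 with ∑_k λ_k < ∞) and let σ ∈ [0, 1]. Then ( ∑_{k=1}^∞ λ_k )^{3/2} − ( σ² λ_1 + ∑_{k=2}^∞ λ_k )^{3/2} ≥ (1 − σ²) λ_1^{3/2}. -/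
/-- Reduction of `tr(C)^{3/2}` under the one-dimensional mixture decomposition along the
dominant eigendirection: for a nonincreasing summable sequence `λ_1 ≥ λ_2 ≥ … ≥ 0` and
`σ ∈ [0,1]`,
`(∑_{k≥1} λ_k)^{3/2} − (σ² λ_1 + ∑_{k≥2} λ_k)^{3/2} ≥ (1 − σ²) λ_1^{3/2}`.
(Here `lam i` denotes `λ_{i+1}`.) -/
theorem trace_rpow_reduction (lam : ℕ → ℝ) (hnonneg : ∀ k, 0 ≤ lam k)
    (hmono : ∀ k, lam (k + 1) ≤ lam k) (hsum : Summable lam)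
    (σ : ℝ) (hσ : σ ∈ Set.Icc (0 : ℝ) 1) :
    (1 - σ ^ 2) * lam 0 ^ (3 / 2 : ℝ) ≤
      (∑' k, lam k) ^ (3 / 2 : ℝ) -
        (σ ^ 2 * lam 0 + ∑' k, lam (k + 1)) ^ (3 / 2 : ℝ) := by
  obtain ⟨hσ0, hσ1⟩ := hσ
  set L := lam 0 with hL
  set T := ∑' k, lam (k + 1) with hT
  have hTnn : 0 ≤ T := tsum_nonneg fun k => hnonneg (k + 1)
  have hLnn : 0 ≤ L := hnonneg 0
  have hsum0 : (∑' k, lam k) = L + T := Summable.tsum_eq_zero_add hsum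
  rw [hsum0]
  set s := σ ^ 2 with hs
  have hs0 : 0 ≤ s := sq_nonneg σ
  have hs1 : s ≤ 1 := by
    have := pow_le_one₀ hσ0 hσ1 (n := 2)
    simpa [hs] using this
  have key : ∀ w : ℝ, 0 ≤ w → w ^ (3 / 2 : ℝ) = Real.sqrt w ^ 3 := by
    intro w hw
    rw [← Real.rpow_natCast (Real.sqrt w) 3, Real.sqrt_eq_rpow, ← Real.rpow_mul hw]
    norm_num
  have hb : 0 ≤ s * L + T := by positivity
  rw [key L hLnn, key (L + T) (by linarith), key (s * L + T) hb]
  set x := Real.sqrt (L + T) with hx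
  set y := Real.sqrt (s * L + T) with hy
  set z := Real.sqrt L with hz
  have hx2 : x ^ 2 = L + T := Real.sq_sqrt (by linarith)
  have hy2 : y ^ 2 = s * L + T := Real.sq_sqrt hb
  have hz2 : z ^ 2 = L := Real.sq_sqrt hLnn
  have hxnn : 0 ≤ x := Real.sqrt_nonneg _
  have hynn : 0 ≤ y := Real.sqrt_nonneg _
  have hznn : 0 ≤ z := Real.sqrt_nonneg _
  have hyx : y ≤ x := Real.sqrt_le_sqrt (by nlinarith)
  have hzx : z ≤ x := Real.sqrt_le_sqrt (by linarith)
  have e1 : x ^ 3 - x * y ^ 2 = (1 - s) * L * x := by linear_combination x * hx2 - x * hy2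
  have e2 : z ^ 3 = L * z := by linear_combination z * hz2
  have h1 : 0 ≤ y ^ 2 * (x - y) := mul_nonneg (sq_nonneg y) (sub_nonneg.2 hyx)
  have h2 : 0 ≤ (1 - s) * L * (x - z) :=
    mul_nonneg (mul_nonneg (sub_nonneg.2 hs1) hLnn) (sub_nonneg.2 hzx)
  nlinarith [e1, e2, h1, h2]
end
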